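/- arXiv:1007.2932 — 6 statements merged into one kernel-verified Lean document; each statement's English description precedes it below -/
import Mathlib

section
/- Let n ≥ 2 and let β = σ_{i_1} σ_{i_2} ⋯ σ_{i_{n−1}} be a positive word of length n−1 in B_n such that β^n = Δ_n². Then the index sequence (i_1, …, i_{n−1}) is a permutation of (1, …, n−1); that is, each generator σ_1, …, σ_{n−1} occurs exactly once in the word. -/
/-- The braid relations on `m` generators (for the braid group `B_{m+1}`). -/
def braidRels (m : ℕ) : Set (FreeGroup (Fin m)) :=
  { r | (∃ i j : Fin m, (i : ℕ) + 2 ≤ (j : ℕ) ∧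
      r = FreeGroup.of i * FreeGroup.of j * (FreeGroup.of i)⁻¹ * (FreeGroup.of j)⁻¹) ∨
    (∃ i j : Fin m, (j : ℕ) = (i : ℕ) + 1 ∧
      r = FreeGroup.of i * FreeGroup.of j * FreeGroup.of i *
          (FreeGroup.of j * FreeGroup.of i * FreeGroup.of j)⁻¹) }

/-- The braid group `B_n`, presented on `n - 1` generators. -/
abbrev BraidGroup (n : ℕ) := PresentedGroup (braidRels (n - 1))

/-- The generator `σ_i` of `B_n`, for `1 ≤ i ≤ n - 1` (and the identity otherwise). -/
def braidGen (n i : ℕ) : BraidGroup n :=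
  if h : 1 ≤ i ∧ i ≤ n - 1 then PresentedGroup.of (⟨i - 1, by omega⟩ : Fin (n - 1)) else 1

/-- The product `σ_{i_1} σ_{i_2} ⋯ σ_{i_ℓ}` associated to a list of indices. -/
def wordProd (n : ℕ) (l : List ℕ) : BraidGroup n := (l.map (braidGen n)).prod

/-- A positive braid: a product of generators `σ_i`, `1 ≤ i ≤ n-1` (no inverses). -/
def IsPositiveBraid (n : ℕ) (β : BraidGroup n) : Prop :=
  ∃ l : List ℕ, (∀ i ∈ l, 1 ≤ i ∧ i ≤ n - 1) ∧ β = wordProd n l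

/-- The half twist `Δ_n = (σ_1)(σ_2 σ_1)(σ_3 σ_2 σ_1) ⋯ (σ_{n-1} ⋯ σ_1)`. -/
def halfTwist (n : ℕ) : BraidGroup n :=
  wordProd n (((List.range (n - 1)).map (fun k => (List.range (k + 1)).reverse.map (· + 1))).flatten)

/-- The standard root `δ_n = σ_1 σ_2 ⋯ σ_{n-1}`. -/
def stdRoot (n : ℕ) : BraidGroup n := wordProd n ((List.range (n - 1)).map (· + 1))

/-- The reversed root `δ̄_n = σ_{n-1} σ_{n-2} ⋯ σ_1`. -/
def stdRootBar (n : ℕ) : BraidGroup n := wordProd n (((List.range (n - 1)).map (· + 1)).reverse)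

/-- The descending chain `b, b-1, …, a+1` (of length `b - a`). -/
def chainDesc (a b : ℕ) : List ℕ := (List.range (b - a)).map (fun t => b - t)

/-- The normal-form index sequence of a subset `S = {j_1 < ⋯ < j_r} ⊆ {1, …, n-2}`:
the concatenation of the decreasing chains
`j_1, …, 1; j_2, …, j_1 + 1; …; n-1, …, j_r + 1`. -/
def normalWord (n : ℕ) (S : Finset ℕ) : List ℕ :=
  let bs : List ℕ := (0 :: S.sort (· ≤ ·)) ++ [n - 1]
  ((bs.zip bs.tail).map (fun p => chainDesc p.1 p.2)).flatten

/-- The normal-form braid of a subset `S ⊆ {1, …, n-2}`. -/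
def normalBraid (n : ℕ) (S : Finset ℕ) : BraidGroup n := wordProd n (normalWord n S)

set_option maxHeartbeats 2000000

namespace BP

@[ext] structure Blk (n : ℕ) where
  L : Fin n × Fin n → ℤ
  g : Equiv.Perm (Fin n)

namespace Blk
variable {n : ℕ}

instance : Mul (Blk n) := ⟨fun x y => ⟨fun q => x.L q + y.L (x.g⁻¹ q.1, x.g⁻¹ q.2), x.g * y.g⟩⟩
instance : One (Blk n) := ⟨⟨fun _ => 0, 1⟩⟩
instance : Inv (Blk n) := ⟨fun x => ⟨fun q => - x.L (x.g q.1, x.g q.2), x.g⁻¹⟩⟩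

@[simp] lemma mul_L (x y : Blk n) (q) : (x * y).L q = x.L q + y.L (x.g⁻¹ q.1, x.g⁻¹ q.2) := rfl
@[simp] lemma mul_L' (x y : Blk n) (a b : Fin n) :
    (x * y).L (a, b) = x.L (a, b) + y.L (x.g⁻¹ a, x.g⁻¹ b) := rfl
@[simp] lemma mul_g (x y : Blk n) : (x * y).g = x.g * y.g := rfl
@[simp] lemma one_L (q) : (1 : Blk n).L q = 0 := rfl
@[simp] lemma one_g : (1 : Blk n).g = 1 := rfl
@[simp] lemma inv_g (x : Blk n) : (x⁻¹).g = x.g⁻¹ := rfl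
@[simp] lemma inv_L (x : Blk n) (q) : (x⁻¹).L q = - x.L (x.g q.1, x.g q.2) := rfl

instance : Group (Blk n) where
  mul_assoc x y z := by
    apply Blk.ext
    · funext q
      simp [mul_inv_rev, Equiv.Perm.mul_apply, add_assoc]
    · simp [mul_assoc]
  one_mul x := by
    apply Blk.ext
    · funext q; simp
    · simp
  mul_one x := by
    apply Blk.ext
    · funext q; simp
    · simp
  inv_mul_cancel x := by
    apply Blk.ext
    · funext q; simp
    · simp

end Blk

def pA (n : ℕ) (i : Fin (n-1)) : Fin n := ⟨i.1, by have := i.isLt; omega⟩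
def pB (n : ℕ) (i : Fin (n-1)) : Fin n := ⟨i.1+1, by have := i.isLt; omega⟩

def genB (n : ℕ) (i : Fin (n-1)) : Blk n :=
  ⟨fun q => if q = (pA n i, pB n i) then 1 else 0, Equiv.swap (pA n i) (pB n i)⟩

@[simp] lemma genB_L (n : ℕ) (i : Fin (n-1)) (q) :
    (genB n i).L q = if q = (pA n i, pB n i) then 1 else 0 := rfl
@[simp] lemma genB_g (n : ℕ) (i : Fin (n-1)) :
    (genB n i).g = Equiv.swap (pA n i) (pB n i) := rfl


@[simp] lemma pA_val (n : ℕ) (i : Fin (n-1)) : (pA n i : ℕ) = i := rfl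
@[simp] lemma pB_val (n : ℕ) (i : Fin (n-1)) : (pB n i : ℕ) = i + 1 := rfl

@[simp] lemma mk_val {n a : ℕ} (h : a < n) : ((⟨a, h⟩ : Fin n) : ℕ) = a := rfl

lemma swap_val {n : ℕ} (u v x : Fin n) :
    ((Equiv.swap u v) x : ℕ) =
      if (x:ℕ) = (u:ℕ) then (v:ℕ) else if (x:ℕ) = (v:ℕ) then (u:ℕ) else (x:ℕ) := by
  rcases eq_or_ne x u with rfl | hu
  · rw [Equiv.swap_apply_left]; simp
  · rcases eq_or_ne x v with rfl | hv
    · rw [Equiv.swap_apply_right]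
      rcases eq_or_ne x u with rfl | h
      · simp
      · rw [if_neg (by simpa [Fin.ext_iff] using h), if_pos rfl]
    · rw [Equiv.swap_apply_of_ne_of_ne hu hv,
        if_neg (by simpa [Fin.ext_iff] using hu), if_neg (by simpa [Fin.ext_iff] using hv)]

lemma genB_comm (n : ℕ) (i j : Fin (n-1)) (h : (i:ℕ) + 2 ≤ (j:ℕ)) :
    genB n i * genB n j = genB n j * genB n i := by
  have hi := i.isLt; have hj := j.isLt
  apply Blk.ext
  · funext q
    obtain ⟨a, b⟩ := q
    simp only [Blk.mul_L, genB_L, genB_g, Equiv.swap_inv, Prod.mk.injEq,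
      Fin.ext_iff, swap_val, pA_val, pB_val]
    split_ifs <;> grind
  · apply Equiv.ext
    intro x
    rw [Fin.ext_iff]
    simp only [Blk.mul_g, genB_g, Equiv.Perm.mul_apply, swap_val, pA_val, pB_val]
    split_ifs <;> grind

lemma genB_braid (n : ℕ) (i j : Fin (n-1)) (h : (j:ℕ) = (i:ℕ) + 1) :
    genB n i * genB n j * genB n i = genB n j * genB n i * genB n j := by
  have hi := i.isLt; have hj := j.isLt
  have hba : pB n i = pA n j := by apply Fin.ext; simp [h]
  have hne1 : pA n i ≠ pA n j := by simp only [Ne, Fin.ext_iff, pA_val]; omega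
  have hne2 : pB n j ≠ pA n i := by simp only [Ne, Fin.ext_iff, pA_val, pB_val]; omega
  have hne3 : pA n i ≠ pA n j := hne1
  have f1 : (Equiv.swap (pA n i) (pA n j)) (pA n j) = pA n i := Equiv.swap_apply_right _ _
  have f2 : (Equiv.swap (pA n i) (pA n j)) (pB n j) = pB n j :=
    Equiv.swap_apply_of_ne_of_ne hne2 (by simp only [Ne, Fin.ext_iff, pA_val, pB_val]; omega)
  have f3 : (Equiv.swap (pA n j) (pB n j)) (pA n i) = pA n i :=
    Equiv.swap_apply_of_ne_of_ne hne1 (Ne.symm hne2)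
  have f4 : (Equiv.swap (pA n i) (pA n j)) (pA n i) = pA n j := Equiv.swap_apply_left _ _
  have f5 : (Equiv.swap (pA n j) (pB n j)) (pA n j) = pB n j := Equiv.swap_apply_left _ _
  have f6 : (Equiv.swap (pA n j) (pB n j)) (pB n j) = pA n j := Equiv.swap_apply_right _ _
  apply Blk.ext
  · funext q
    obtain ⟨a, b⟩ := q
    simp only [Blk.mul_L, Blk.mul_g, genB_L, genB_g, mul_inv_rev, Prod.mk.injEq,
      Equiv.Perm.mul_apply, Equiv.Perm.inv_eq_iff_eq, hba, f1, f2, f3, f4, f5, f6]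
    ring
  · apply Equiv.ext
    intro x
    rw [Fin.ext_iff]
    simp only [Blk.mul_g, genB_g, Equiv.Perm.mul_apply, swap_val, pA_val, pB_val]
    split_ifs <;> grind

lemma braid_rels_check (n : ℕ) :
    ∀ r ∈ braidRels (n-1), FreeGroup.lift (genB n) r = 1 := by
  rintro r (⟨i, j, hij, rfl⟩ | ⟨i, j, hij, rfl⟩)
  · simp only [map_mul, map_inv, FreeGroup.lift_apply_of]
    rw [genB_comm n i j hij, mul_inv_cancel_right, mul_inv_cancel]
  · simp only [map_mul, map_inv, FreeGroup.lift_apply_of]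
    rw [show genB n i * genB n j * genB n i = genB n j * genB n i * genB n j from
      genB_braid n i j hij, mul_inv_cancel]

def Fhom (n : ℕ) : BraidGroup n →* Blk n := PresentedGroup.toGroup (braid_rels_check n)

@[simp] lemma Fhom_of (n : ℕ) (x : Fin (n-1)) :
    Fhom n (PresentedGroup.of x) = genB n x :=
  PresentedGroup.toGroup.of (braid_rels_check n)

lemma wordProd_nil (n : ℕ) : wordProd n [] = 1 := rfl

lemma wordProd_cons (n : ℕ) (i : ℕ) (l : List ℕ) :
    wordProd n (i :: l) = braidGen n i * wordProd n l := by
  simp [wordProd]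

lemma wordProd_append (n : ℕ) (u v : List ℕ) :
    wordProd n (u ++ v) = wordProd n u * wordProd n v := by
  simp [wordProd]

lemma wordProd_singleton (n : ℕ) (i : ℕ) : wordProd n [i] = braidGen n i := by
  simp [wordProd]

lemma Fhom_gen (n i : ℕ) (h1 : 1 ≤ i) (h2 : i ≤ n - 1) :
    Fhom n (braidGen n i) = genB n ⟨i - 1, by omega⟩ := by
  rw [braidGen, dif_pos ⟨h1, h2⟩]
  exact PresentedGroup.toGroup.of (braid_rels_check n)

lemma g_inv_lt_iff {n j : ℕ} (g : Equiv.Perm (Fin n))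
    (hg : ∀ y : Fin n, ((g y : Fin n) : ℕ) < j ↔ (y : ℕ) < j) :
    ∀ y : Fin n, ((g⁻¹ y : Fin n) : ℕ) < j ↔ (y : ℕ) < j := by
  intro y
  have h := hg (g⁻¹ y)
  rw [Equiv.Perm.inv_def, Equiv.apply_symm_apply] at h
  exact h.symm

lemma genB_g_lt_iff {n : ℕ} (k : Fin (n-1)) (j : ℕ) (hk : (k : ℕ) + 1 ≠ j) :
    ∀ y : Fin n, (((genB n k).g y : Fin n) : ℕ) < j ↔ (y : ℕ) < j := by
  intro y
  rw [genB_g, swap_val, pA_val, pB_val]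
  split_ifs <;> omega

lemma missing_letter {n : ℕ} (j : ℕ) (l : List ℕ)
    (hl : ∀ i ∈ l, 1 ≤ i ∧ i ≤ n - 1) (hj : j ∉ l) :
    (∀ x : Fin n, ((Fhom n (wordProd n l)).g x : ℕ) < j ↔ (x : ℕ) < j) ∧
    (∀ a b : Fin n, ((a : ℕ) < j ∧ j ≤ (b : ℕ)) ∨ ((b : ℕ) < j ∧ j ≤ (a : ℕ)) →
      (Fhom n (wordProd n l)).L (a, b) = 0) := by
  induction l with
  | nil =>
    constructor
    · intro x; rw [wordProd_nil, map_one]; simp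
    · intro a b _; rw [wordProd_nil, map_one]; simp
  | cons i l ih =>
    obtain ⟨h1, h2⟩ := hl i (List.mem_cons_self)
    have hine : i ≠ j := fun e => hj (e ▸ List.mem_cons_self)
    obtain ⟨ihg, ihL⟩ := ih (fun x hx => hl x (List.mem_cons_of_mem _ hx))
      (fun hx => hj (List.mem_cons_of_mem _ hx))
    rw [wordProd_cons, map_mul, Fhom_gen n i h1 h2]
    have hs := genB_g_lt_iff (n := n) ⟨i - 1, by omega⟩ j (by simp only [mk_val]; omega)
    constructor
    · intro x
      rw [Blk.mul_g, Equiv.Perm.mul_apply]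
      exact (hs _).trans (ihg x)
    · intro a b hab
      rw [Blk.mul_L']
      have t1 : (genB n ⟨i - 1, by omega⟩).L (a, b) = 0 := by
        rw [genB_L, if_neg]
        intro e
        rw [Prod.mk.injEq] at e
        have v1 : (a : ℕ) = i - 1 := by rw [e.1]; rfl
        have v2 : (b : ℕ) = i - 1 + 1 := by rw [e.2]; rfl
        omega
      have hinvs := g_inv_lt_iff _ hs
      have t2 : (Fhom n (wordProd n l)).L
          ((genB n ⟨i - 1, by omega⟩).g⁻¹ a, (genB n ⟨i - 1, by omega⟩).g⁻¹ b) = 0 := by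
        apply ihL
        have ha := hinvs a
        have hb := hinvs b
        omega
      rw [t1, t2]
      simp

lemma pow_props {n j : ℕ} (x : Blk n)
    (hg : ∀ y : Fin n, ((x.g y : Fin n) : ℕ) < j ↔ (y : ℕ) < j)
    (hL : ∀ a b : Fin n, ((a : ℕ) < j ∧ j ≤ (b : ℕ)) ∨ ((b : ℕ) < j ∧ j ≤ (a : ℕ)) →
      x.L (a, b) = 0) :
    ∀ m : ℕ, (∀ y : Fin n, (((x ^ m).g y : Fin n) : ℕ) < j ↔ (y : ℕ) < j) ∧
      (∀ a b : Fin n, ((a : ℕ) < j ∧ j ≤ (b : ℕ)) ∨ ((b : ℕ) < j ∧ j ≤ (a : ℕ)) →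
        (x ^ m).L (a, b) = 0) := by
  intro m
  induction m with
  | zero =>
    rw [pow_zero]
    exact ⟨fun y => by simp, fun a b _ => by simp⟩
  | succ m ih =>
    obtain ⟨ihg, ihL⟩ := ih
    rw [pow_succ]
    constructor
    · intro y
      rw [Blk.mul_g, Equiv.Perm.mul_apply]
      exact (ihg _).trans (hg y)
    · intro a b hab
      rw [Blk.mul_L', ihL a b hab]
      have hinvs := g_inv_lt_iff _ ihg
      have ha := hinvs a
      have hb := hinvs b
      rw [hL _ _ (by omega)]
      simp

def chainW (m c : ℕ) : List ℕ := (List.range c).map (fun s => m + 1 - s)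

def twW (m : ℕ) : List ℕ := ((List.range m).map (fun k => chainW k (k+1))).flatten

lemma chainW_succ (m c : ℕ) : chainW m (c+1) = chainW m c ++ [m + 1 - c] := by
  simp [chainW, List.range_succ]

lemma twW_succ (m : ℕ) : twW (m+1) = twW m ++ chainW m (m+1) := by
  simp [twW, List.range_succ]

lemma chain_eq_rev (k : ℕ) :
    (List.range (k+1)).reverse.map (· + 1) = chainW k (k+1) := by
  apply List.ext_getElem
  · simp [chainW]
  · intro i h1 h2
    have hi : i < k + 1 := by simpa [chainW] using h2
    simp only [chainW, List.getElem_map, List.getElem_reverse, List.length_reverse,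
      List.length_range, List.getElem_range]
    omega

lemma halfTwist_eq (n : ℕ) : halfTwist n = wordProd n (twW (n-1)) := by
  unfold halfTwist twW
  congr 2
  apply List.map_congr_left
  intro k _
  exact chain_eq_rev k

lemma chain_props (n m : ℕ) (hm : m + 1 ≤ n - 1) :
    ∀ c, c ≤ m + 1 →
      (∀ x : Fin n, ((Fhom n (wordProd n (chainW m c))).g x : ℕ) =
        if (x : ℕ) = m + 1 - c then m + 1
        else if m + 1 - c < (x : ℕ) ∧ (x : ℕ) ≤ m + 1 then (x : ℕ) - 1 else (x : ℕ)) ∧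
      (∀ a b : Fin n, (Fhom n (wordProd n (chainW m c))).L (a, b) =
        if (b : ℕ) = m + 1 ∧ m + 1 - c ≤ (a : ℕ) ∧ (a : ℕ) ≤ m then 1 else 0) := by
  intro c
  induction c with
  | zero =>
    intro _
    constructor
    · intro x
      have hx := x.isLt
      rw [show chainW m 0 = [] from rfl, wordProd_nil, map_one, Blk.one_g,
        Equiv.Perm.one_apply]
      split_ifs <;> omega
    · intro a b
      have ha := a.isLt
      rw [show chainW m 0 = [] from rfl, wordProd_nil, map_one, Blk.one_L]
      split_ifs <;> omega
  | succ c ih =>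
    intro hc
    obtain ⟨ihg, ihL⟩ := ih (by omega)
    have h1 : 1 ≤ m + 1 - c := by omega
    have h2 : m + 1 - c ≤ n - 1 := by omega
    rw [chainW_succ, wordProd_append, wordProd_singleton, map_mul,
      Fhom_gen n (m + 1 - c) h1 h2]
    have gA : ((Fhom n (wordProd n (chainW m c))).g (pA n ⟨m + 1 - c - 1, by omega⟩) : ℕ)
        = m + 1 - c - 1 := by
      rw [ihg, pA_val]
      simp only [mk_val]
      split_ifs <;> omega
    have gB : ((Fhom n (wordProd n (chainW m c))).g (pB n ⟨m + 1 - c - 1, by omega⟩) : ℕ)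
        = m + 1 := by
      rw [ihg, pB_val]
      simp only [mk_val]
      split_ifs <;> omega
    constructor
    · intro x
      have hx := x.isLt
      rw [Blk.mul_g, Equiv.Perm.mul_apply, ihg, genB_g, swap_val, pA_val, pB_val]
      simp only [mk_val]
      split_ifs <;> omega
    · intro a b
      have ha := a.isLt
      have hb := b.isLt
      rw [Blk.mul_L', ihL a b, genB_L]
      have hcond : ((Fhom n (wordProd n (chainW m c))).g⁻¹ a,
            (Fhom n (wordProd n (chainW m c))).g⁻¹ b)
          = (pA n ⟨m + 1 - c - 1, by omega⟩, pB n ⟨m + 1 - c - 1, by omega⟩)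
          ↔ ((a : ℕ) = m + 1 - c - 1 ∧ (b : ℕ) = m + 1) := by
        rw [Prod.ext_iff]
        simp only [Equiv.Perm.inv_eq_iff_eq]
        constructor
        · rintro ⟨hA, hB⟩
          rw [hA, hB]
          exact ⟨gA, gB⟩
        · rintro ⟨hA, hB⟩
          constructor
          · apply Fin.ext; rw [gA, hA]
          · apply Fin.ext; rw [gB, hB]
      rw [if_congr hcond rfl rfl]
      split_ifs <;> omega

lemma tw_props (n : ℕ) : ∀ m, m ≤ n - 1 →
    (∀ x : Fin n, ((Fhom n (wordProd n (twW m))).g x : ℕ) =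
      if (x : ℕ) ≤ m then m - (x : ℕ) else (x : ℕ)) ∧
    (∀ a b : Fin n, (Fhom n (wordProd n (twW m))).L (a, b) =
      if (a : ℕ) < (b : ℕ) ∧ (b : ℕ) ≤ m then 1 else 0) := by
  intro m
  induction m with
  | zero =>
    intro _
    constructor
    · intro x
      rw [show twW 0 = [] from rfl, wordProd_nil, map_one, Blk.one_g,
        Equiv.Perm.one_apply]
      split_ifs <;> omega
    · intro a b
      rw [show twW 0 = [] from rfl, wordProd_nil, map_one, Blk.one_L]
      split_ifs <;> omega
  | succ m ih =>
    intro hm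
    obtain ⟨ihg, ihL⟩ := ih (by omega)
    obtain ⟨cg, cL⟩ := chain_props n m (by omega) (m+1) le_rfl
    rw [twW_succ, wordProd_append, map_mul]
    have hinv : ∀ y : Fin n, (((Fhom n (wordProd n (twW m))).g⁻¹ y : Fin n) : ℕ) =
        if (y : ℕ) ≤ m then m - (y : ℕ) else (y : ℕ) := by
      intro y
      have hy := y.isLt
      have hgg : (Fhom n (wordProd n (twW m))).g ((Fhom n (wordProd n (twW m))).g y) = y := by
        apply Fin.ext
        rw [ihg, ihg]
        split_ifs <;> omega
      have : (Fhom n (wordProd n (twW m))).g⁻¹ y = (Fhom n (wordProd n (twW m))).g y := by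
        conv_lhs => rw [← hgg]
        rw [Equiv.Perm.inv_def, Equiv.symm_apply_apply]
      rw [this, ihg]
    constructor
    · intro x
      have hx := x.isLt
      rw [Blk.mul_g, Equiv.Perm.mul_apply, ihg, cg]
      split_ifs <;> omega
    · intro a b
      have ha := a.isLt
      have hb := b.isLt
      rw [Blk.mul_L', ihL a b, cL, hinv a, hinv b]
      split_ifs <;> omega

end BP

set_option maxHeartbeats 1000000 in
/-- If `β = σ_{i_1} ⋯ σ_{i_{n-1}}` is a positive word of length `n - 1` in
`B_n` (`n ≥ 2`) with `β ^ n = Δ_n²`, then `(i_1, …, i_{n-1})` is a permutation of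
`(1, …, n-1)`. -/
theorem positive_root_word_is_permutation (n : ℕ) (hn : 2 ≤ n) (l : List ℕ)
    (hl : ∀ i ∈ l, 1 ≤ i ∧ i ≤ n - 1) (hlen : l.length = n - 1)
    (hroot : (wordProd n l) ^ n = (halfTwist n) ^ 2) :
    l.Perm ((List.range (n - 1)).map (· + 1)) := by
  have hmem : ∀ j : ℕ, 1 ≤ j → j ≤ n - 1 → j ∈ l := by
    intro j hj1 hj2
    by_contra hj
    rw [BP.halfTwist_eq] at hroot
    have hF := congrArg (BP.Fhom n) hroot
    rw [map_pow, map_pow] at hF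
    obtain ⟨hg, hL⟩ := BP.missing_letter j l hl hj
    obtain ⟨pg, pL⟩ := BP.pow_props _ hg hL n
    obtain ⟨tg, tL⟩ := BP.tw_props n (n-1) le_rfl
    have hinv : ∀ y : Fin n,
        (((BP.Fhom n (wordProd n (BP.twW (n-1)))).g⁻¹ y : Fin n) : ℕ) =
          if (y : ℕ) ≤ n-1 then n-1 - (y : ℕ) else (y : ℕ) := by
      intro y
      have hy := y.isLt
      have hgg : (BP.Fhom n (wordProd n (BP.twW (n-1)))).g
          ((BP.Fhom n (wordProd n (BP.twW (n-1)))).g y) = y := by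
        apply Fin.ext
        rw [tg, tg]
        split_ifs <;> omega
      have e : (BP.Fhom n (wordProd n (BP.twW (n-1)))).g⁻¹ y
          = (BP.Fhom n (wordProd n (BP.twW (n-1)))).g y := by
        conv_lhs => rw [← hgg]
        rw [Equiv.Perm.inv_def, Equiv.symm_apply_apply]
      rw [e, tg]
    have h0 : ((BP.Fhom n (wordProd n l)) ^ n).L (⟨j - 1, by omega⟩, ⟨j, by omega⟩) = 0 :=
      pL _ _ (Or.inl ⟨by simp only [BP.mk_val]; omega, by simp only [BP.mk_val]; omega⟩)
    rw [hF, pow_two, BP.Blk.mul_L'] at h0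
    simp only [tL, hinv, BP.mk_val] at h0
    split_ifs at h0 <;> omega
  have hsub : ((List.range (n-1)).map (· + 1)) ⊆ l := by
    intro x hx
    simp only [List.mem_map, List.mem_range] at hx
    obtain ⟨k, hk, rfl⟩ := hx
    exact hmem (k+1) (by omega) (by omega)
  have hnd : ((List.range (n-1)).map (· + 1)).Nodup :=
    List.Nodup.map (fun x y h => by omega) List.nodup_range
  have hsp := List.subperm_of_subset hnd hsub
  have hlen2 : l.length ≤ ((List.range (n-1)).map (· + 1)).length := by
    simp [hlen]
  exact (hsp.perm_of_length_le hlen2).symm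
end

section
/- For every integer n ≥ 2 and every sequence (i_1, …, i_{n−1}) that is a permutation of (1, …, n−1), the braid β = σ_{i_1} σ_{i_2} ⋯ σ_{i_{n−1}} ∈ B_n satisfies β^n = Δ_n², i.e., β is an n-th root of the full twist. -/
lemma rel_eq_one {m : ℕ} {r : FreeGroup (Fin m)} (hr : r ∈ braidRels m) :
    PresentedGroup.mk (braidRels m) r = 1 :=
  (QuotientGroup.eq_one_iff r).mpr (Subgroup.subset_normalClosure hr)

lemma braidGen_eq_one {n i : ℕ} (h : ¬ (1 ≤ i ∧ i ≤ n - 1)) : braidGen n i = 1 := dif_neg h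

lemma braidGen_eq {n i : ℕ} (h : 1 ≤ i ∧ i ≤ n - 1) :
    braidGen n i = PresentedGroup.of (⟨i - 1, by omega⟩ : Fin (n - 1)) := dif_pos h

lemma braid_comm {n : ℕ} (i j : ℕ) (h : i + 2 ≤ j) :
    Commute (braidGen n i) (braidGen n j) := by
  by_cases h1 : 1 ≤ i ∧ i ≤ n - 1
  · by_cases h2 : 1 ≤ j ∧ j ≤ n - 1
    · rw [braidGen_eq h1, braidGen_eq h2]
      rw [← commutatorElement_eq_one_iff_commute]
      have hr : (FreeGroup.of (⟨i-1, by omega⟩ : Fin (n-1)) * FreeGroup.of (⟨j-1, by omega⟩ : Fin (n-1)) *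
          (FreeGroup.of (⟨i-1, by omega⟩ : Fin (n-1)))⁻¹ * (FreeGroup.of (⟨j-1, by omega⟩ : Fin (n-1)))⁻¹) ∈ braidRels (n-1) := by
        left
        exact ⟨_, _, by simp; omega, rfl⟩
      have := rel_eq_one hr
      simpa [commutatorElement_def, PresentedGroup.of] using this
    · rw [braidGen_eq_one h2]; exact Commute.one_right _
  · rw [braidGen_eq_one h1]; exact Commute.one_left _

lemma braid_braid {n : ℕ} (i : ℕ) (h1 : 1 ≤ i) (h2 : i + 1 ≤ n - 1) :
    braidGen n i * braidGen n (i+1) * braidGen n i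
      = braidGen n (i+1) * braidGen n i * braidGen n (i+1) := by
  rw [braidGen_eq ⟨h1, by omega⟩, braidGen_eq ⟨by omega, h2⟩]
  have hr : (FreeGroup.of (⟨i-1, by omega⟩ : Fin (n-1)) * FreeGroup.of (⟨i+1-1, by omega⟩ : Fin (n-1)) *
      FreeGroup.of (⟨i-1, by omega⟩ : Fin (n-1)) *
      (FreeGroup.of (⟨i+1-1, by omega⟩ : Fin (n-1)) * FreeGroup.of (⟨i-1, by omega⟩ : Fin (n-1)) *
        FreeGroup.of (⟨i+1-1, by omega⟩ : Fin (n-1)))⁻¹) ∈ braidRels (n-1) := by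
    right
    exact ⟨_, _, by simp; omega, rfl⟩
  have h := rel_eq_one hr
  simp only [map_mul, map_inv, PresentedGroup.of] at h ⊢
  rw [mul_inv_eq_one] at h
  exact h

/- basic wordProd lemmas -/
lemma wordProd_nil (n : ℕ) : wordProd n [] = 1 := rfl

lemma wordProd_cons (n a : ℕ) (l : List ℕ) :
    wordProd n (a :: l) = braidGen n a * wordProd n l := by
  simp [wordProd]

lemma wordProd_append (n : ℕ) (l₁ l₂ : List ℕ) :
    wordProd n (l₁ ++ l₂) = wordProd n l₁ * wordProd n l₂ := by
  simp [wordProd]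

lemma wordProd_singleton (n a : ℕ) : wordProd n [a] = braidGen n a := by
  simp [wordProd]

lemma commute_wordProd {n : ℕ} {a : BraidGroup n} {l : List ℕ}
    (h : ∀ x ∈ l, Commute a (braidGen n x)) : Commute a (wordProd n l) := by
  induction l with
  | nil => exact Commute.one_right _
  | cons b t ih =>
    rw [wordProd_cons]
    exact (h b (by simp)).mul_right (ih fun x hx => h x (by simp [hx]))

/- D m = σ_1 ⋯ σ_m -/
def Dw (m : ℕ) : List ℕ := (List.range m).map (· + 1)
def D (n m : ℕ) : BraidGroup n := wordProd n (Dw m)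

lemma Dw_succ (m : ℕ) : Dw (m+1) = Dw m ++ [m+1] := by
  simp [Dw, List.range_succ]

lemma D_succ (n m : ℕ) : D n (m+1) = D n m * braidGen n (m+1) := by
  rw [D, Dw_succ, wordProd_append, wordProd_singleton]; rfl

lemma Dw_mem {m x : ℕ} (h : x ∈ Dw m) : 1 ≤ x ∧ x ≤ m := by
  simp [Dw] at h
  obtain ⟨a, ha, rfl⟩ := h
  omega

/- shift: D m σ_i = σ_{i+1} D m for 1 ≤ i, i+1 ≤ m ≤ n-1 -/
lemma shift {n : ℕ} : ∀ m, m ≤ n - 1 → ∀ i, 1 ≤ i → i + 1 ≤ m →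
    D n m * braidGen n i = braidGen n (i+1) * D n m := by
  intro m
  induction m with
  | zero => omega
  | succ m ih =>
    intro hm i hi1 hi2
    rcases Nat.lt_or_ge (i+1) (m+1) with hlt | hge
    · -- i + 1 ≤ m
      have hc : Commute (braidGen n i) (braidGen n (m+1)) := braid_comm i (m+1) (by omega)
      rw [D_succ, mul_assoc, ← hc.eq, ← mul_assoc, ih (by omega) i hi1 (by omega), mul_assoc]
    · -- i = m
      have him : i = m := by omega
      subst him
      obtain ⟨p, rfl⟩ : ∃ p, i = p + 1 := ⟨i - 1, by omega⟩
      rw [D_succ, D_succ]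
      have hcomm : Commute (braidGen n (p+2)) (D n p) :=
        commute_wordProd (fun x hx => by
          have := Dw_mem hx
          exact (braid_comm x (p+2) (by omega)).symm)
      calc D n p * braidGen n (p+1) * braidGen n (p+2) * braidGen n (p+1)
          = D n p * (braidGen n (p+1) * braidGen n (p+2) * braidGen n (p+1)) := by
            group
        _ = D n p * (braidGen n (p+2) * braidGen n (p+1) * braidGen n (p+2)) := by
            rw [braid_braid (p+1) (by omega) (by omega)]
        _ = braidGen n (p+2) * (D n p * braidGen n (p+1) * braidGen n (p+2)) := by
            rw [← mul_assoc, ← mul_assoc, ← hcomm.eq]; group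

/- ascending tail chain A k = σ_k σ_{k+1} ⋯ σ_{n-1} -/
def A (n k : ℕ) : BraidGroup n := wordProd n (List.range' k (n - k))

lemma A_eq_one {n k : ℕ} (h : n ≤ k) : A n k = 1 := by
  rw [A, Nat.sub_eq_zero_of_le h]; rfl

lemma A_succ {n k : ℕ} (h : k ≤ n - 1) (hn : 1 ≤ n) : A n k = braidGen n k * A n (k+1) := by
  have h1 : n - k = (n - (k+1)) + 1 := by omega
  rw [A, h1, List.range'_succ, wordProd_cons, A]

lemma range'_mem {s m x : ℕ} (h : x ∈ List.range' s m) : s ≤ x ∧ x < s + m := by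
  simpa using List.mem_range'_1.mp h

lemma commute_A {n k j : ℕ} (h : j + 2 ≤ k) : Commute (braidGen n j) (A n k) :=
  commute_wordProd (fun x hx => braid_comm j x (by have := range'_mem hx; omega))

lemma wrap_aux {n : ℕ} (hn : 2 ≤ n) : ∀ d k, k = n - 1 - d → 1 ≤ k →
    A n (k+1) * (A n k * braidGen n (n-1)) = A n k * A n k := by
  intro d
  induction d with
  | zero =>
    intro k hk hk1
    have hk' : k = n - 1 := by omega
    subst hk'
    rw [A_eq_one (by omega), A_succ (le_refl _) (by omega), A_eq_one (by omega)]
    group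
  | succ d ih =>
    intro k hk hk1
    have hkn : k + 1 ≤ n - 1 := by omega
    have hAk : A n k = braidGen n k * A n (k+1) := A_succ (by omega) (by omega)
    have hAk1 : A n (k+1) = braidGen n (k+1) * A n (k+2) := A_succ hkn (by omega)
    have hIH := ih (k+1) (by omega) (by omega)
    have hc : Commute (braidGen n k) (A n (k+2)) := commute_A (by omega)
    -- LHS = σ(k+1) σk A(k+2) A(k+1) σ(n-1)
    calc A n (k+1) * (A n k * braidGen n (n-1))
        = (A n (k+1) * braidGen n k) * (A n (k+1) * braidGen n (n-1)) := by
          rw [hAk]; group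
      _ = (braidGen n (k+1) * (A n (k+2) * braidGen n k)) * (A n (k+1) * braidGen n (n-1)) := by
          rw [hAk1]; group
      _ = (braidGen n (k+1) * (braidGen n k * A n (k+2))) * (A n (k+1) * braidGen n (n-1)) := by
          rw [hc.eq]
      _ = braidGen n (k+1) * braidGen n k * (A n (k+2) * (A n (k+1) * braidGen n (n-1))) := by
          group
      _ = braidGen n (k+1) * braidGen n k * (A n (k+1) * A n (k+1)) := by rw [hIH]
      _ = (braidGen n (k+1) * braidGen n k * braidGen n (k+1)) * (A n (k+2) * A n (k+1)) := by
          rw [hAk1]; group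
      _ = (braidGen n k * braidGen n (k+1) * braidGen n k) * (A n (k+2) * A n (k+1)) := by
          rw [← braid_braid k (by omega) hkn]
      _ = braidGen n k * braidGen n (k+1) * (braidGen n k * A n (k+2)) * A n (k+1) := by
          group
      _ = braidGen n k * braidGen n (k+1) * (A n (k+2) * braidGen n k) * A n (k+1) := by
          rw [hc.eq]
      _ = A n k * A n k := by rw [hAk, hAk1]; group

lemma A_one_eq_D {n : ℕ} : A n 1 = D n (n-1) := by
  rw [A, D]
  congr 1
  rw [Dw]
  induction (n-1 : ℕ) with
  | zero => rfl
  | succ m ih =>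
    rw [List.range_succ, List.range'_concat, List.map_append, ih]
    simp [Nat.add_comm]

/- δ² σ_{n-1} = σ_1 δ² -/
lemma wrap {n : ℕ} (hn : 2 ≤ n) :
    D n (n-1) * D n (n-1) * braidGen n (n-1) = braidGen n 1 * (D n (n-1) * D n (n-1)) := by
  have h := wrap_aux hn (n-2) 1 (by omega) (by omega)
  have hA1 : A n 1 = braidGen n 1 * A n 2 := A_succ (by omega) (by omega)
  rw [← A_one_eq_D]
  calc A n 1 * A n 1 * braidGen n (n-1)
      = braidGen n 1 * (A n 2 * (A n 1 * braidGen n (n-1))) := by rw [hA1]; group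
    _ = braidGen n 1 * (A n 1 * A n 1) := by rw [h]

/- shift for powers -/
lemma shift_pow {n : ℕ} (hn : 2 ≤ n) : ∀ j i, 1 ≤ i → i + j ≤ n - 1 →
    (D n (n-1))^j * braidGen n i = braidGen n (i+j) * (D n (n-1))^j := by
  intro j
  induction j with
  | zero => intro i _ _; simp
  | succ j ih =>
    intro i hi1 hij
    have hsh : D n (n-1) * braidGen n i = braidGen n (i+1) * D n (n-1) :=
      shift (n-1) (le_refl _) i hi1 (by omega)
    calc (D n (n-1))^(j+1) * braidGen n i
        = (D n (n-1))^j * (D n (n-1) * braidGen n i) := by rw [pow_succ]; group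
      _ = (D n (n-1))^j * braidGen n (i+1) * D n (n-1) := by rw [hsh]; group
      _ = braidGen n (i+1+j) * (D n (n-1))^j * D n (n-1) := by
          rw [ih (i+1) (by omega) (by omega)]
      _ = braidGen n (i+j+1) * (D n (n-1))^(j+1) := by
          rw [pow_succ]
          have : i + 1 + j = i + j + 1 := by omega
          rw [this, mul_assoc]

/- δ^n commutes with every generator -/
lemma delta_pow_central {n : ℕ} (hn : 2 ≤ n) (i : ℕ) :
    Commute (braidGen n i) ((D n (n-1))^n) := by
  by_cases hi : 1 ≤ i ∧ i ≤ n - 1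
  · -- first: commutes with σ_1
    have h1 : (D n (n-1))^n * braidGen n 1 = braidGen n 1 * (D n (n-1))^n := by
      have e1 : (D n (n-1))^(n-2) * braidGen n 1 = braidGen n (n-1) * (D n (n-1))^(n-2) := by
        have := shift_pow hn (n-2) 1 (by omega) (by omega)
        rwa [show 1 + (n-2) = n - 1 by omega] at this
      have e2 : (D n (n-1))^n = (D n (n-1))^2 * (D n (n-1))^(n-2) := by
        rw [← pow_add]; congr 1; omega
      calc (D n (n-1))^n * braidGen n 1
          = (D n (n-1))^2 * ((D n (n-1))^(n-2) * braidGen n 1) := by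
            rw [e2]; group
        _ = (D n (n-1))^2 * braidGen n (n-1) * (D n (n-1))^(n-2) := by rw [e1]; group
        _ = braidGen n 1 * (D n (n-1))^2 * (D n (n-1))^(n-2) := by
            rw [pow_two, mul_assoc (D n (n-1)) _ _, ← mul_assoc, ← pow_two]
            rw [pow_two, wrap hn]
        _ = braidGen n 1 * (D n (n-1))^n := by rw [mul_assoc, ← e2]
    -- general i via σ_i δ^{i-1} = δ^{i-1} σ_1
    have e3 : (D n (n-1))^(i-1) * braidGen n 1 = braidGen n i * (D n (n-1))^(i-1) := by
      have := shift_pow hn (i-1) 1 (by omega) (by omega)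
      rwa [show 1 + (i-1) = i by omega] at this
    have : braidGen n i * (D n (n-1))^n * (D n (n-1))^(i-1)
        = (D n (n-1))^n * braidGen n i * (D n (n-1))^(i-1) := by
      calc braidGen n i * (D n (n-1))^n * (D n (n-1))^(i-1)
          = braidGen n i * (D n (n-1))^(i-1) * (D n (n-1))^n := by
            rw [mul_assoc, ← pow_add, Nat.add_comm, pow_add, mul_assoc]
        _ = (D n (n-1))^(i-1) * braidGen n 1 * (D n (n-1))^n := by rw [← e3]
        _ = (D n (n-1))^(i-1) * (braidGen n 1 * (D n (n-1))^n) := by group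
        _ = (D n (n-1))^(i-1) * ((D n (n-1))^n * braidGen n 1) := by rw [← h1]
        _ = (D n (n-1))^n * ((D n (n-1))^(i-1) * braidGen n 1) := by
            rw [← mul_assoc, ← pow_add, Nat.add_comm, pow_add]; group
        _ = (D n (n-1))^n * braidGen n i * (D n (n-1))^(i-1) := by rw [e3]; group
    exact mul_right_cancel this
  · rw [braidGen_eq_one hi]; exact Commute.one_left _

/- half twist machinery -/
def cword (j : ℕ) : List ℕ := (List.range j).reverse.map (· + 1)
def Cc (n j : ℕ) : BraidGroup n := wordProd n (cword j)
def Hw (m : ℕ) : List ℕ :=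
  ((List.range m).map (fun k => (List.range (k + 1)).reverse.map (· + 1))).flatten
def H (n m : ℕ) : BraidGroup n := wordProd n (Hw m)

lemma cword_succ (j : ℕ) : cword (j+1) = (j+1) :: cword j := by
  simp [cword, List.range_succ]

lemma Cc_succ (n j : ℕ) : Cc n (j+1) = braidGen n (j+1) * Cc n j := by
  rw [Cc, cword_succ, wordProd_cons]; rfl

lemma cword_mem {j x : ℕ} (h : x ∈ cword j) : 1 ≤ x ∧ x ≤ j := by
  simp [cword] at h; omega

lemma Hw_succ (m : ℕ) : Hw (m+1) = Hw m ++ cword (m+1) := by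
  simp [Hw, List.range_succ, cword]

lemma H_succ (n m : ℕ) : H n (m+1) = H n m * Cc n (m+1) := by
  rw [H, Hw_succ, wordProd_append]; rfl

lemma Hw_mem {m x : ℕ} (h : x ∈ Hw m) : 1 ≤ x ∧ x ≤ m := by
  simp only [Hw, List.mem_flatten, List.mem_map] at h
  obtain ⟨l, ⟨k, hk, rfl⟩, hx⟩ := h
  have := cword_mem (j := k+1) (by simpa [cword] using hx)
  simp at hk
  omega

/- H (m+1) = D (m+1) * H m  (unconditional) -/
lemma HD (n : ℕ) : ∀ m, H n (m+1) = D n (m+1) * H n m := by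
  intro m
  induction m with
  | zero =>
    show H n 1 = D n 1 * H n 0
    rw [H_succ, show (Cc n 1) = braidGen n 1 * Cc n 0 from Cc_succ n 0]
    show H n 0 * (braidGen n 1 * Cc n 0) = D n 1 * H n 0
    have h0 : H n 0 = 1 := rfl
    have c0 : Cc n 0 = 1 := rfl
    have d1 : D n 1 = braidGen n 1 := by rw [show (1:ℕ) = 0 + 1 from rfl, D_succ]; simp [D, Dw, wordProd]
    rw [h0, c0, d1]; group
  | succ m ih =>
    have hcomm : Commute (braidGen n (m+2)) (H n m) :=
      commute_wordProd (fun x hx => by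
        have := Hw_mem hx
        exact (braid_comm x (m+2) (by omega)).symm)
    calc H n (m+2) = H n (m+1) * Cc n (m+2) := H_succ n (m+1)
      _ = D n (m+1) * H n m * (braidGen n (m+2) * Cc n (m+1)) := by rw [ih, Cc_succ]
      _ = D n (m+1) * (H n m * braidGen n (m+2)) * Cc n (m+1) := by group
      _ = D n (m+1) * (braidGen n (m+2) * H n m) * Cc n (m+1) := by rw [← hcomm.eq]
      _ = (D n (m+1) * braidGen n (m+2)) * (H n m * Cc n (m+1)) := by group
      _ = D n ((m+1)+1) * H n (m+1) := by rw [← D_succ, ← H_succ]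

/- E b k = σ_b σ_{b-1} ⋯ σ_{b-k+1} -/
def eword (b k : ℕ) : List ℕ := (List.range k).map (b - ·)
def E (n b k : ℕ) : BraidGroup n := wordProd n (eword b k)

lemma eword_concat (b k : ℕ) : eword b (k+1) = eword b k ++ [b - k] := by
  simp [eword, List.range_succ]

lemma E_concat (n b k : ℕ) : E n b (k+1) = E n b k * braidGen n (b - k) := by
  rw [E, eword_concat, wordProd_append, wordProd_singleton]; rfl

lemma eword_head (b k : ℕ) : eword (b+1) (k+1) = (b+1) :: eword b k := by
  rw [eword, List.range_succ_eq_map]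
  simp [eword, Function.comp_def]

lemma E_head (n b k : ℕ) : E n (b+1) (k+1) = braidGen n (b+1) * E n b k := by
  rw [E, eword_head, wordProd_cons]; rfl

lemma eword_mem {b k x : ℕ} (h : x ∈ eword b k) : x ≤ b := by
  simp [eword] at h; omega

lemma E_zero (n b : ℕ) : E n b 0 = 1 := rfl

/- cword j = eword j j -/
lemma cword_eq_eword : ∀ j, cword j = eword j j := by
  intro j
  induction j with
  | zero => rfl
  | succ j ih => rw [cword_succ, eword_head, ih]

/- rev_chain : E (m+1) j * D (m+1) = D (m+1) * E m j, for j ≤ m, m+1 ≤ n-1 -/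
lemma rev_chain {n : ℕ} (m : ℕ) (hm : m + 1 ≤ n - 1) : ∀ j, j ≤ m →
    E n (m+1) j * D n (m+1) = D n (m+1) * E n m j := by
  intro j
  induction j with
  | zero => intro _; rw [E_zero, E_zero]; group
  | succ j ih =>
    intro hj
    have hsh : braidGen n (m+1-j) * D n (m+1) = D n (m+1) * braidGen n (m-j) := by
      have := shift (n := n) (m+1) hm (m-j) (by omega) (by omega)
      rw [show m - j + 1 = m + 1 - j by omega] at this
      exact this.symm
    calc E n (m+1) (j+1) * D n (m+1)
        = E n (m+1) j * (braidGen n (m+1-j) * D n (m+1)) := by rw [E_concat]; group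
      _ = E n (m+1) j * D n (m+1) * braidGen n (m-j) := by rw [hsh]; group
      _ = D n (m+1) * E n m j * braidGen n (m-j) := by rw [ih (by omega)]
      _ = D n (m+1) * E n m (j+1) := by rw [E_concat]; group

/- key identity -/
lemma keyid {n : ℕ} (p : ℕ) (hp : p + 2 ≤ n - 1) : ∀ k, k ≤ p →
    E n (p+2) (k+1) * (D n (p+1) * braidGen n (p+2)) = D n (p+1) * E n (p+2) (k+2) := by
  intro k hk
  have hE1 : E n (p+2) (k+1) = braidGen n (p+2) * E n (p+1) k := E_head n (p+1) k
  have hE2 : E n (p+2) (k+2) = braidGen n (p+2) * (braidGen n (p+1) * E n p k) := by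
    rw [E_head, E_head]
  have hrc : E n (p+1) k * D n (p+1) = D n (p+1) * E n p k :=
    rev_chain p (by omega) k hk
  have hcE : Commute (braidGen n (p+2)) (E n p k) :=
    commute_wordProd (fun x hx => (braid_comm x (p+2) (by have := eword_mem hx; omega)).symm)
  have hcD : Commute (braidGen n (p+2)) (D n p) :=
    commute_wordProd (fun x hx => (braid_comm x (p+2) (by have := Dw_mem hx; omega)).symm)
  have hbr : braidGen n (p+2) * braidGen n (p+1) * braidGen n (p+2)
      = braidGen n (p+1) * braidGen n (p+2) * braidGen n (p+1) :=
    (braid_braid (p+1) (by omega) (by omega)).symm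
  have hmini : braidGen n (p+2) * D n (p+1) * braidGen n (p+2)
      = D n (p+1) * (braidGen n (p+2) * braidGen n (p+1)) := by
    calc braidGen n (p+2) * D n (p+1) * braidGen n (p+2)
        = (braidGen n (p+2) * D n p) * braidGen n (p+1) * braidGen n (p+2) := by
          rw [D_succ]; rw [mul_assoc, mul_assoc, mul_assoc, mul_assoc]
      _ = (D n p * braidGen n (p+2)) * braidGen n (p+1) * braidGen n (p+2) := by rw [hcD.eq]
      _ = D n p * (braidGen n (p+2) * braidGen n (p+1) * braidGen n (p+2)) := by
          rw [mul_assoc, mul_assoc, mul_assoc]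
      _ = D n p * (braidGen n (p+1) * braidGen n (p+2) * braidGen n (p+1)) := by rw [hbr]
      _ = (D n p * braidGen n (p+1)) * (braidGen n (p+2) * braidGen n (p+1)) := by
          simp only [mul_assoc]
      _ = D n (p+1) * (braidGen n (p+2) * braidGen n (p+1)) := by rw [D_succ]
  calc E n (p+2) (k+1) * (D n (p+1) * braidGen n (p+2))
      = braidGen n (p+2) * (E n (p+1) k * D n (p+1)) * braidGen n (p+2) := by
        rw [hE1]; rw [mul_assoc, mul_assoc, mul_assoc]
    _ = braidGen n (p+2) * (D n (p+1) * E n p k) * braidGen n (p+2) := by rw [hrc]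
    _ = (braidGen n (p+2) * D n (p+1)) * (E n p k * braidGen n (p+2)) := by
        rw [mul_assoc, mul_assoc, mul_assoc]
    _ = (braidGen n (p+2) * D n (p+1)) * (braidGen n (p+2) * E n p k) := by rw [← hcE.eq]
    _ = (braidGen n (p+2) * D n (p+1) * braidGen n (p+2)) * E n p k := by
        simp only [mul_assoc]
    _ = D n (p+1) * (braidGen n (p+2) * braidGen n (p+1)) * E n p k := by rw [hmini]
    _ = D n (p+1) * E n (p+2) (k+2) := by rw [hE2]; simp only [mul_assoc]

/- pow_chain : D(m+1)^k = D m ^ k * E (m+1) k, for k ≤ m+1, m+1 ≤ n-1 -/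
lemma pow_chain {n : ℕ} (m : ℕ) (hm : m + 1 ≤ n - 1) : ∀ k, k ≤ m + 1 →
    (D n (m+1))^k = (D n m)^k * E n (m+1) k := by
  intro k
  induction k with
  | zero => intro _; simp [E_zero]
  | succ k ih =>
    intro hk
    rcases Nat.eq_zero_or_pos k with rfl | hkpos
    · rw [pow_one, pow_one, D_succ]
      congr 1
      rw [show (1:ℕ) = 0 + 1 from rfl, E_concat, E_zero, Nat.sub_zero, one_mul]
    · obtain ⟨k', rfl⟩ : ∃ k', k = k' + 1 := ⟨k - 1, by omega⟩
      obtain ⟨p, rfl⟩ : ∃ p, m = p + 1 := ⟨m - 1, by omega⟩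
      have hkey := keyid (n := n) p (by omega) k' (by omega)
      have ih' : (D n (p+2))^(k'+1) = (D n (p+1))^(k'+1) * E n (p+2) (k'+1) := ih (by omega)
      have hds : D n (p+2) = D n (p+1) * braidGen n (p+2) := D_succ n (p+1)
      calc (D n (p+2))^(k'+2)
          = (D n (p+2))^(k'+1) * D n (p+2) := pow_succ _ _
        _ = (D n (p+1))^(k'+1) * E n (p+2) (k'+1) * (D n (p+1) * braidGen n (p+2)) := by
            rw [ih', hds]
        _ = (D n (p+1))^(k'+1) * (E n (p+2) (k'+1) * (D n (p+1) * braidGen n (p+2))) := by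
            simp only [mul_assoc]
        _ = (D n (p+1))^(k'+1) * (D n (p+1) * E n (p+2) (k'+2)) := by rw [hkey]
        _ = (D n (p+1))^(k'+2) * E n (p+2) (k'+2) := by
            rw [show (D n (p+1))^(k'+2) = (D n (p+1))^(k'+1) * D n (p+1) from pow_succ _ _]
            simp only [mul_assoc]

/- main power identity: D m ^ (m+1) = H m ^ 2, for m ≤ n-1 -/
lemma mainpow {n : ℕ} : ∀ m, m ≤ n - 1 → (D n m)^(m+1) = (H n m)^2 := by
  intro m
  induction m with
  | zero =>
    intro _
    have h1 : D n 0 = 1 := rfl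
    have h2 : H n 0 = 1 := rfl
    rw [h1, h2, one_pow, one_pow]
  | succ m ih =>
    intro hm
    have hCE : Cc n (m+1) = E n (m+1) (m+1) := by rw [Cc, E, cword_eq_eword]
    calc (D n (m+1))^(m+2)
        = D n (m+1) * (D n (m+1))^(m+1) := (pow_succ' _ _)
      _ = D n (m+1) * ((D n m)^(m+1) * E n (m+1) (m+1)) := by
          rw [pow_chain m hm (m+1) (le_refl _)]
      _ = D n (m+1) * ((H n m)^2 * Cc n (m+1)) := by rw [ih (by omega), hCE]
      _ = (D n (m+1) * H n m) * (H n m * Cc n (m+1)) := by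
          rw [pow_two]; simp only [mul_assoc]
      _ = H n (m+1) * H n (m+1) := by rw [← HD, ← H_succ]
      _ = (H n (m+1))^2 := (pow_two _).symm

/- conjugation lemma: every permutation word of {k,…,n-1} is conjugate to the
   ascending chain, with conjugator a word in letters ≥ k+1 -/
lemma conj_lemma {n : ℕ} : ∀ len k l, 1 ≤ k → l.length = len →
    l.Perm (List.range' k (n - k)) →
    ∃ gl : List ℕ, (∀ x ∈ gl, k + 1 ≤ x) ∧
      wordProd n l = wordProd n gl * wordProd n (List.range' k (n - k)) * (wordProd n gl)⁻¹ := by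
  intro len
  induction len with
  | zero =>
    intro k l _ hlen hp
    have hl : l = [] := List.eq_nil_of_length_eq_zero hlen
    subst hl
    have ht : List.range' k (n - k) = [] := hp.symm.eq_nil
    exact ⟨[], by simp, by rw [ht]; simp [wordProd_nil]⟩
  | succ len ih =>
    intro k l hk hlen hp
    have hlen' : (List.range' k (n - k)).length = len + 1 := by rw [← hp.length_eq, hlen]
    have hnk : n - k = len + 1 := by simpa using hlen'
    have hsplit : List.range' k (n - k) = k :: List.range' (k+1) (n - (k+1)) := by
      rw [show n - k = (n - (k+1)) + 1 by omega, List.range'_succ]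
    have hkmem : k ∈ l := hp.mem_iff.mpr (by rw [hsplit]; simp)
    obtain ⟨x, y, rfl⟩ := List.append_of_mem hkmem
    have hperm' : (x ++ y).Perm (List.range' (k+1) (n - (k+1))) := by
      have h1 : (k :: (x ++ y)).Perm (k :: List.range' (k+1) (n - (k+1))) :=
        (List.perm_middle.symm).trans (hp.trans (by rw [hsplit]))
      exact h1.cons_inv
    have hbound : ∀ a ∈ x ++ y, k + 1 ≤ a ∧ a ≤ n - 1 := by
      intro a ha
      have := range'_mem (hperm'.subset ha)
      omega
    have hnodup : (x ++ y).Nodup := hperm'.nodup_iff.mpr (List.nodup_range' 1 Nat.one_pos)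
    have hlen2 : (x ++ y).length = len := by
      have := hlen; simp at this ⊢; omega
    obtain ⟨gl', hgl', heq'⟩ := ih (k+1) (x ++ y) (by omega) hlen2 hperm'
    -- commutation of σ_k with gl'
    have hcgl' : Commute (braidGen n k) (wordProd n gl') :=
      commute_wordProd fun a ha => braid_comm k a (by have := hgl' a ha; omega)
    -- σ_k * wordProd (x++y) = gl' * chain k * gl'⁻¹
    have hkey : braidGen n k * wordProd n (x ++ y)
        = wordProd n gl' * wordProd n (List.range' k (n - k)) * (wordProd n gl')⁻¹ := by
      rw [heq', hsplit, wordProd_cons]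
      calc braidGen n k * (wordProd n gl' * wordProd n (List.range' (k+1) (n-(k+1))) * (wordProd n gl')⁻¹)
          = (braidGen n k * wordProd n gl') * wordProd n (List.range' (k+1) (n-(k+1))) * (wordProd n gl')⁻¹ := by
            simp only [mul_assoc]
        _ = (wordProd n gl' * braidGen n k) * wordProd n (List.range' (k+1) (n-(k+1))) * (wordProd n gl')⁻¹ := by
            rw [hcgl'.eq]
        _ = wordProd n gl' * (braidGen n k * wordProd n (List.range' (k+1) (n-(k+1)))) * (wordProd n gl')⁻¹ := by
            simp only [mul_assoc]
    -- now split on where k+1 sits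
    by_cases hmem : k + 1 ∈ x
    · -- y has letters ≥ k+2, so wordProd l = wordProd (x++y) * σ_k
      have hky : ∀ a ∈ y, k + 2 ≤ a := by
        intro a ha
        have h1 := hbound a (by simp [ha])
        have h2 : a ≠ k + 1 := by
          rintro rfl
          exact (List.disjoint_of_nodup_append hnodup) hmem ha
        omega
      have hcy : Commute (braidGen n k) (wordProd n y) :=
        commute_wordProd fun a ha => braid_comm k a (hky a ha)
      have hwl : wordProd n (x ++ k :: y) = wordProd n (x ++ y) * braidGen n k := by
        rw [wordProd_append, wordProd_cons, wordProd_append, hcy.eq]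
        simp only [mul_assoc]
      refine ⟨(x ++ y) ++ gl', ?_, ?_⟩
      · intro a ha
        rcases List.mem_append.mp ha with h | h
        · exact (hbound a h).1
        · have := hgl' a h; omega
      · rw [hwl,
          show wordProd n (x ++ y ++ gl') = wordProd n (x ++ y) * wordProd n gl' from
            wordProd_append n _ _,
          show wordProd n (x ++ y) * braidGen n k
              = wordProd n (x ++ y) * (braidGen n k * wordProd n (x ++ y)) * (wordProd n (x ++ y))⁻¹
            by group,
          hkey]
        simp only [mul_inv_rev, mul_assoc]
    · -- x has letters ≥ k+2, so wordProd l = σ_k * wordProd (x++y)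
      have hkx : ∀ a ∈ x, k + 2 ≤ a := by
        intro a ha
        have h1 := hbound a (by simp [ha])
        have h2 : a ≠ k + 1 := by rintro rfl; exact hmem ha
        omega
      have hcx : Commute (braidGen n k) (wordProd n x) :=
        commute_wordProd fun a ha => braid_comm k a (hkx a ha)
      have hwl : wordProd n (x ++ k :: y) = braidGen n k * wordProd n (x ++ y) := by
        rw [wordProd_append, wordProd_cons, wordProd_append, ← mul_assoc, ← hcx.eq]
        simp only [mul_assoc]
      exact ⟨gl', fun a ha => by have := hgl' a ha; omega, by rw [hwl, hkey]⟩

lemma map_range_eq_range' (m : ℕ) : (List.range m).map (· + 1) = List.range' 1 m := by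
  induction m with
  | zero => rfl
  | succ m ih =>
    rw [List.range_succ, List.range'_concat, List.map_append, ih]
    simp [Nat.add_comm]


/-- For every `n ≥ 2` and every sequence `(i_1, …, i_{n-1})` that is a
permutation of `(1, …, n-1)`, the braid `β = σ_{i_1} σ_{i_2} ⋯ σ_{i_{n-1}} ∈ B_n`
satisfies `β ^ n = Δ_n²`. -/
theorem permutation_word_is_root (n : ℕ) (hn : 2 ≤ n) (l : List ℕ)
    (hperm : l.Perm ((List.range (n - 1)).map (· + 1))) :
    (wordProd n l) ^ n = (halfTwist n) ^ 2 := by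
  show (wordProd n l) ^ n = (H n (n-1)) ^ 2
  rw [map_range_eq_range' (n-1)] at hperm
  obtain ⟨gl, hgl, heq⟩ := conj_lemma l.length 1 l le_rfl rfl hperm
  have hA : wordProd n (List.range' 1 (n - 1)) = D n (n-1) := A_one_eq_D
  rw [hA] at heq
  have hcomm : Commute ((D n (n-1))^n) (wordProd n gl) :=
    commute_wordProd fun a _ => (delta_pow_central hn a).symm
  have hmain : (D n (n-1))^n = (H n (n-1))^2 := by
    have := mainpow (n := n) (n-1) le_rfl
    rwa [show n - 1 + 1 = n by omega] at this
  calc (wordProd n l)^n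
      = (wordProd n gl * D n (n-1) * (wordProd n gl)⁻¹)^n := by rw [heq]
    _ = wordProd n gl * (D n (n-1))^n * (wordProd n gl)⁻¹ := conj_pow
    _ = (D n (n-1))^n * wordProd n gl * (wordProd n gl)⁻¹ := by rw [← hcomm.eq]
    _ = (D n (n-1))^n := by group
    _ = (H n (n-1))^2 := hmain
end

section
/- For every integer n ≥ 2 and every sequence (i_1, …, i_{n−1}) that is a permutation of (1, …, n−1), the braid β = σ_{i_1} σ_{i_2} ⋯ σ_{i_{n−1}} is conjugate in B_n to the standard root δ_n = σ_1 σ_2 ⋯ σ_{n−1}. -/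
namespace BraidAux

lemma of_comm_of_le {m : ℕ} (i j : Fin m) (hij : (i : ℕ) + 2 ≤ (j : ℕ)) :
    (PresentedGroup.of i : PresentedGroup (braidRels m)) * PresentedGroup.of j
      = PresentedGroup.of j * PresentedGroup.of i := by
  have hr : (FreeGroup.of i * FreeGroup.of j * (FreeGroup.of i)⁻¹ * (FreeGroup.of j)⁻¹)
      ∈ braidRels m := Or.inl ⟨i, j, hij, rfl⟩
  have h1 : PresentedGroup.mk (braidRels m)
      (FreeGroup.of i * FreeGroup.of j * (FreeGroup.of i)⁻¹ * (FreeGroup.of j)⁻¹) = 1 := by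
    have : (QuotientGroup.mk (FreeGroup.of i * FreeGroup.of j * (FreeGroup.of i)⁻¹ *
        (FreeGroup.of j)⁻¹) : FreeGroup (Fin m) ⧸ Subgroup.normalClosure (braidRels m)) = 1 := by
      rw [QuotientGroup.eq_one_iff]
      exact Subgroup.subset_normalClosure hr
    exact this
  have h2 : (PresentedGroup.of (rels := braidRels m) i) * PresentedGroup.of j *
      (PresentedGroup.of i)⁻¹ * (PresentedGroup.of j)⁻¹ = 1 := by
    simpa only [PresentedGroup.of, map_mul, map_inv] using h1
  rw [mul_inv_eq_one, mul_inv_eq_iff_eq_mul] at h2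
  exact h2

lemma braidGen_comm (n : ℕ) {x y : ℕ} (h : x + 1 ≠ y ∧ y + 1 ≠ x) :
    braidGen n x * braidGen n y = braidGen n y * braidGen n x := by
  rcases eq_or_ne x y with rfl | hxy; · rfl
  unfold braidGen
  by_cases hx : 1 ≤ x ∧ x ≤ n - 1
  · by_cases hy : 1 ≤ y ∧ y ≤ n - 1
    · simp only [dif_pos hx, dif_pos hy]
      rcases lt_or_gt_of_ne hxy with hlt | hlt
      · exact of_comm_of_le _ _ (by simp; omega)
      · exact (of_comm_of_le _ _ (by simp; omega)).symm
    · simp [dif_neg hy]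
  · simp [dif_neg hx]

lemma wordProd_append (n : ℕ) (a b : List ℕ) :
    wordProd n (a ++ b) = wordProd n a * wordProd n b := by
  simp [wordProd]

lemma wordProd_cons (n : ℕ) (x : ℕ) (l : List ℕ) :
    wordProd n (x :: l) = braidGen n x * wordProd n l := by
  simp [wordProd]

lemma wordProd_pull (n : ℕ) (s : ℕ) (a b : List ℕ)
    (h : ∀ t ∈ a, s + 1 ≠ t ∧ t + 1 ≠ s) :
    wordProd n (a ++ s :: b) = braidGen n s * wordProd n (a ++ b) := by
  induction a with
  | nil => simp [wordProd_cons]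
  | cons x a ih =>
      have hx := h x (by simp)
      have hcomm : braidGen n s * braidGen n x = braidGen n x * braidGen n s :=
        braidGen_comm n ⟨hx.1, hx.2⟩
      have ih' := ih (fun t ht => h t (by simp [ht]))
      simp only [List.cons_append, wordProd_cons, ih', ← mul_assoc, hcomm]

/-- Moves on index words that preserve the conjugacy class in the braid group:
`comm` swaps two adjacent commuting letters (an equality in the group), and
`src` rotates a letter that commutes with everything before it to the end
(a conjugation). -/
inductive Step : List ℕ → List ℕ → Prop
  | comm (a b : List ℕ) (x y : ℕ) (h : x + 1 ≠ y ∧ y + 1 ≠ x) :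
      Step (a ++ x :: y :: b) (a ++ y :: x :: b)
  | src (a b : List ℕ) (s : ℕ) (h : ∀ t ∈ a, s + 1 ≠ t ∧ t + 1 ≠ s) :
      Step (a ++ s :: b) ((a ++ b) ++ [s])

lemma Step.isConj {n : ℕ} {l₁ l₂ : List ℕ} (h : Step l₁ l₂) :
    IsConj (wordProd n l₁) (wordProd n l₂) := by
  induction h with
  | comm a b x y h =>
      have : wordProd n (a ++ x :: y :: b) = wordProd n (a ++ y :: x :: b) := by
        simp only [wordProd_append, wordProd_cons, ← mul_assoc]
        rw [mul_assoc (wordProd n a), braidGen_comm n h, ← mul_assoc]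
      rw [this]
  | src a b s h =>
      rw [wordProd_pull n s a b h, wordProd_append, wordProd_append]
      rw [isConj_iff]
      refine ⟨(braidGen n s)⁻¹, ?_⟩
      simp [wordProd, mul_assoc]

lemma Step.perm {l₁ l₂ : List ℕ} (h : Step l₁ l₂) : l₁.Perm l₂ := by
  induction h with
  | comm a b x y h => exact (List.Perm.append_left a (List.Perm.swap y x b))
  | src a b s h =>
      exact List.perm_middle.trans ((List.perm_append_singleton s (a ++ b)).symm)

lemma chain_perm {l₁ l₂ : List ℕ} (h : Relation.ReflTransGen Step l₁ l₂) : l₁.Perm l₂ := by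
  induction h with
  | refl => exact List.Perm.refl _
  | tail _ hstep ih => exact ih.trans hstep.perm

lemma chain_isConj {n : ℕ} {l₁ l₂ : List ℕ} (h : Relation.ReflTransGen Step l₁ l₂) :
    IsConj (wordProd n l₁) (wordProd n l₂) := by
  induction h with
  | refl => exact IsConj.refl _
  | tail _ hstep ih => exact ih.trans hstep.isConj

/-- Shift a letter rightwards through a block of letters it commutes with. -/
lemma blockMove (a c d : List ℕ) (s : ℕ) (h : ∀ t ∈ c, s + 1 ≠ t ∧ t + 1 ≠ s) :
    Relation.ReflTransGen Step (a ++ s :: (c ++ d)) (a ++ c ++ s :: d) := by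
  induction c generalizing a with
  | nil => simpa using Relation.ReflTransGen.refl
  | cons x c ih =>
      have hx := h x (by simp)
      have step1 : Step (a ++ s :: x :: (c ++ d)) (a ++ x :: s :: (c ++ d)) :=
        Step.comm a (c ++ d) s x hx
      have chain2 := ih (a ++ [x]) (fun t ht => h t (by simp [ht]))
      refine Relation.ReflTransGen.head (b := a ++ x :: s :: (c ++ d)) step1 ?_
      simpa using chain2

/-- The sorted word `[1, 2, …, m]`. -/
def T (m : ℕ) : List ℕ := (List.range m).map (· + 1)

lemma T_succ (m : ℕ) : T (m + 1) = T m ++ [m + 1] := by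
  simp [T, List.range_succ]

lemma mem_T {m t : ℕ} : t ∈ T m ↔ 1 ≤ t ∧ t ≤ m := by
  simp only [T, List.mem_map, List.mem_range]
  constructor
  · rintro ⟨a, ha, rfl⟩; omega
  · intro h; exact ⟨t - 1, by omega, by omega⟩

lemma nodup_T (m : ℕ) : (T m).Nodup :=
  (@List.nodup_range m).map (fun a b h => by omega)

lemma liftStep {m : ℕ} {w v : List ℕ} (hw : w.Perm (T m)) (h : Step w v) :
    Relation.ReflTransGen Step (w ++ [m + 1]) (v ++ [m + 1]) := by
  have hmem : ∀ t ∈ w, 1 ≤ t ∧ t ≤ m := fun t ht => mem_T.mp (hw.mem_iff.mp ht)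
  have hnd : w.Nodup := hw.nodup_iff.mpr (nodup_T m)
  cases h with
  | comm a b x y hxy =>
      refine Relation.ReflTransGen.single ?_
      have := Step.comm a (b ++ [m + 1]) x y hxy
      simpa using this
  | src a b s hs =>
      have step1 : Step ((a ++ s :: b) ++ [m + 1]) ((a ++ (b ++ [m + 1])) ++ [s]) :=
        by simpa using Step.src a (b ++ [m + 1]) s hs
      have hsm : 1 ≤ s ∧ s ≤ m := hmem s (by simp)
      have hnd' := List.nodup_cons.mp (List.nodup_middle.mp hnd)
      by_cases hcase : s = m
      · obtain rfl : m = s := hcase.symm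
        have h2 : ∀ t ∈ a ++ b, (m + 1) + 1 ≠ t ∧ t + 1 ≠ m + 1 := by
          intro t ht
          have h1 : 1 ≤ t ∧ t ≤ m := hmem t (by
            rcases List.mem_append.mp ht with h' | h'
            · exact List.mem_append.mpr (Or.inl h')
            · exact List.mem_append.mpr (Or.inr (List.mem_cons_of_mem _ h')))
          have h3 : t ≠ m := fun he => hnd'.1 (he ▸ ht)
          omega
        have step2 : Step ((a ++ b) ++ (m + 1) :: [m]) (((a ++ b) ++ [m]) ++ [m + 1]) :=
          by simpa using Step.src (a ++ b) [m] (m + 1) h2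
        refine (Relation.ReflTransGen.single step1).trans (Relation.ReflTransGen.single ?_)
        simpa using step2
      · have step2 : Step ((a ++ b) ++ (m + 1) :: s :: []) ((a ++ b) ++ s :: (m + 1) :: []) :=
          Step.comm (a ++ b) [] (m + 1) s ⟨by omega, by omega⟩
        refine (Relation.ReflTransGen.single step1).trans (Relation.ReflTransGen.single ?_)
        simpa using step2

lemma liftChain {m : ℕ} {u v : List ℕ} (hu : u.Perm (T m))
    (h : Relation.ReflTransGen Step u v) :
    Relation.ReflTransGen Step (u ++ [m + 1]) (v ++ [m + 1]) := by
  induction h with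
  | refl => exact Relation.ReflTransGen.refl
  | tail hc hstep ih =>
      exact ih.trans (liftStep ((chain_perm hc).symm.trans hu) hstep)

lemma sortChain (m : ℕ) : ∀ u : List ℕ, u.Perm (T m) → Relation.ReflTransGen Step u (T m) := by
  induction m with
  | zero =>
      intro u hu
      have he : u = [] := List.Perm.eq_nil (by simpa [T] using hu)
      rw [he]
      exact Relation.ReflTransGen.refl
  | succ m ih =>
      intro u hu
      have hnd : u.Nodup := hu.nodup_iff.mpr (nodup_T _)
      have hmem : ∀ t ∈ u, 1 ≤ t ∧ t ≤ m + 1 := fun t ht => mem_T.mp (hu.mem_iff.mp ht)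
      have hm1 : (m + 1) ∈ u := hu.mem_iff.mpr (mem_T.mpr ⟨by omega, le_refl _⟩)
      obtain ⟨a, b, rfl⟩ := List.append_of_mem hm1
      have hnd' := List.nodup_cons.mp (List.nodup_middle.mp hnd)
      have hdisj : List.Disjoint a b := List.disjoint_of_nodup_append hnd'.2
      have main : Relation.ReflTransGen Step (a ++ (m + 1) :: b) ((a ++ b) ++ [m + 1]) := by
        by_cases hma : m ∈ a
        · have hb : ∀ t ∈ b, (m + 1) + 1 ≠ t ∧ t + 1 ≠ m + 1 := by
            intro t ht
            have h1 : 1 ≤ t ∧ t ≤ m + 1 := hmem t (by simp [ht])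
            have h2 : t ≠ m + 1 := fun he => hnd'.1 (List.mem_append.mpr (Or.inr (he ▸ ht)))
            have h3 : t ≠ m := fun he => hdisj hma (he ▸ ht)
            omega
          simpa using blockMove a b [] (m + 1) hb
        · have ha : ∀ t ∈ a, (m + 1) + 1 ≠ t ∧ t + 1 ≠ m + 1 := by
            intro t ht
            have h1 : 1 ≤ t ∧ t ≤ m + 1 := hmem t (by simp [ht])
            have h2 : t ≠ m + 1 := fun he => hnd'.1 (List.mem_append.mpr (Or.inl (he ▸ ht)))
            have h3 : t ≠ m := fun he => hma (he ▸ ht)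
            omega
          exact Relation.ReflTransGen.single (Step.src a b (m + 1) ha)
      have hperm' : (a ++ b).Perm (T m) := by
        have h1 : ((a ++ b) ++ [m + 1]).Perm (T m ++ [m + 1]) :=
          (chain_perm main).symm.trans (hu.trans (by rw [T_succ]))
        exact (List.perm_append_right_iff _).mp h1
      have tail := liftChain hperm' (ih (a ++ b) hperm')
      rw [T_succ]
      exact main.trans tail

end BraidAux

/-- For every `n ≥ 2` and every sequence `(i_1, …, i_{n-1})` that is a
permutation of `(1, …, n-1)`, the braid `σ_{i_1} σ_{i_2} ⋯ σ_{i_{n-1}}` is conjugate in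
`B_n` to the standard root `δ_n = σ_1 σ_2 ⋯ σ_{n-1}`. -/
theorem permutation_word_conjugate_to_standard_root (n : ℕ) (hn : 2 ≤ n) (l : List ℕ)
    (hperm : l.Perm ((List.range (n - 1)).map (· + 1))) :
    IsConj (stdRoot n) (wordProd n l) := by
  have h : Relation.ReflTransGen BraidAux.Step l (BraidAux.T (n - 1)) :=
    BraidAux.sortChain (n - 1) l hperm
  have hc := BraidAux.chain_isConj (n := n) h
  have hs : stdRoot n = wordProd n (BraidAux.T (n - 1)) := rfl
  rw [hs]
  exact hc.symm
end

section
/- Let n ≥ 2. For any two distinct subsets S ≠ S' of {1, …, n−2}, the images under π of the normal-form braids of S and of S' are distinct permutations in S_n; in particular, the normal-form braids of S and S' are distinct elements of B_n. Consequently, the map from subsets of {1, …, n−2} to B_n sending S to its normal-form braid is injective, and its image has exactly 2^{n−2} elements. -/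
def permOf (n i : ℕ) : Equiv.Perm (Fin n) :=
  if h : 1 ≤ i ∧ i ≤ n - 1 then
    Equiv.swap ⟨i - 1, by omega⟩ ⟨i, by omega⟩ else 1

def wperm (n : ℕ) (l : List ℕ) : Equiv.Perm (Fin n) := (l.map (permOf n)).prod

lemma wperm_nil (n : ℕ) : wperm n [] = 1 := rfl

lemma wperm_cons (n i : ℕ) (l : List ℕ) :
    wperm n (i :: l) = permOf n i * wperm n l := by
  simp [wperm]

lemma wperm_append (n : ℕ) (l₁ l₂ : List ℕ) :
    wperm n (l₁ ++ l₂) = wperm n l₁ * wperm n l₂ := by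
  simp [wperm]

lemma chainDesc_eq_nil (a b : ℕ) (h : b ≤ a) : chainDesc a b = [] := by
  simp [chainDesc, Nat.sub_eq_zero_of_le h]

lemma chainDesc_succ (a b : ℕ) (h : a ≤ b) :
    chainDesc a (b + 1) = (b + 1) :: chainDesc a b := by
  have : b + 1 - a = (b - a) + 1 := by omega
  rw [chainDesc, this, List.range_succ_eq_map]
  simp only [List.map_cons, Nat.sub_zero, List.map_map]
  congr 1
  apply List.map_congr_left
  intro t ht
  simp only [Function.comp]
  have := List.mem_range.mp ht
  omega

lemma swap_val (n b c : ℕ) (hb : b < n) (hc : c < n) (y : Fin n) :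
    ((Equiv.swap (⟨b, hb⟩ : Fin n) ⟨c, hc⟩ y : Fin n) : ℕ) =
      if (y : ℕ) = b then c else if (y : ℕ) = c then b else (y : ℕ) := by
  rw [Equiv.swap_apply_def]
  split_ifs <;> simp_all [Fin.ext_iff]

lemma chain_spec (n a : ℕ) : ∀ b, a ≤ b → b ≤ n - 1 → ∀ x : Fin n,
    ((wperm n (chainDesc a b) x : ℕ) =
      if (x : ℕ) = a ∧ a < b then b
      else if a < (x : ℕ) ∧ (x : ℕ) ≤ b then (x : ℕ) - 1 else (x : ℕ)) := by
  intro b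
  induction b with
  | zero =>
    intro hab _ x
    rw [chainDesc_eq_nil a 0 (by omega)]
    simp only [wperm_nil, Equiv.Perm.one_apply]
    split_ifs <;> omega
  | succ b ih =>
    intro hab hb x
    rcases Nat.lt_or_ge a (b + 1) with hlt | hge
    · have hab' : a ≤ b := by omega
      rw [chainDesc_succ a b hab', wperm_cons]
      have hxval := ih hab' (by omega) x
      have hperm : permOf n (b + 1) = Equiv.swap (⟨b, by omega⟩ : Fin n) ⟨b + 1, by omega⟩ := by
        rw [permOf, dif_pos ⟨by omega, by omega⟩]
        congr 1
      rw [Equiv.Perm.mul_apply, hperm, swap_val]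
      split_ifs at hxval ⊢ <;> omega
    · rw [chainDesc_eq_nil a (b+1) hge]
      simp only [wperm_nil, Equiv.Perm.one_apply]
      split_ifs <;> omega

/-- Recursive form of the normal word. -/
def stairWord (a : ℕ) : List ℕ → ℕ → List ℕ
  | [], b => chainDesc a b
  | c :: t, b => chainDesc a c ++ stairWord c t b

lemma zip_flatten_eq_stair (b : ℕ) : ∀ (l : List ℕ) (a : ℕ),
    ((((a :: l) ++ [b]).zip (l ++ [b])).map (fun p => chainDesc p.1 p.2)).flatten
      = stairWord a l b := by
  intro l
  induction l with
  | nil => intro a; simp [stairWord]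
  | cons c t ih =>
    intro a
    simp only [List.cons_append, List.zip_cons_cons, List.map_cons, List.flatten_cons, stairWord]
    rw [← List.cons_append, ih c]

lemma normalWord_eq_stair (n : ℕ) (S : Finset ℕ) :
    normalWord n S = stairWord 0 (S.sort (· ≤ ·)) (n - 1) := by
  rw [normalWord]
  have : ((0 :: S.sort (· ≤ ·)) ++ [n - 1]).tail = S.sort (· ≤ ·) ++ [n - 1] := by
    simp
  rw [this]
  exact zip_flatten_eq_stair (n - 1) (S.sort (· ≤ ·)) 0

lemma stair_spec (n : ℕ) : ∀ (l : List ℕ) (a b : ℕ),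
    l.Pairwise (· < ·) → (∀ c ∈ l, a < c ∧ c < b) → a < b → b ≤ n - 1 →
    (∀ x : Fin n, ((x : ℕ) = a ∨ (x : ℕ) ∈ l) →
        (x : ℕ) < (wperm n (stairWord a l b) x : ℕ)) ∧
    (∀ x : Fin n, a < (x : ℕ) → (x : ℕ) ≤ b → (x : ℕ) ∉ l →
        (wperm n (stairWord a l b) x : ℕ) < (x : ℕ)) ∧
    (∀ x : Fin n, ((x : ℕ) < a ∨ b < (x : ℕ)) → wperm n (stairWord a l b) x = x) := by
  intro l
  induction l with
  | nil =>
    intro a b _ _ hab hb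
    refine ⟨?_, ?_, ?_⟩
    · intro x hx
      have := chain_spec n a b (by omega) hb x
      rcases hx with hx | hx
      · rw [stairWord, this]; split_ifs <;> omega
      · simp at hx
    · intro x h1 h2 _
      have := chain_spec n a b (by omega) hb x
      rw [stairWord, this]; split_ifs <;> omega
    · intro x hx
      have := chain_spec n a b (by omega) hb x
      apply Fin.ext
      rw [stairWord] at *
      rw [this]; split_ifs <;> omega
  | cons c t ih =>
    intro a b hsort hmem hab hb
    have hac : a < c := (hmem c (by simp)).1
    have hcb : c < b := (hmem c (by simp)).2
    have hsort' : t.Pairwise (· < ·) := hsort.tail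
    have hmem' : ∀ d ∈ t, c < d ∧ d < b := by
      intro d hd
      exact ⟨(List.pairwise_cons.mp hsort).1 d hd, (hmem d (by simp [hd])).2⟩
    obtain ⟨IH1, IH2, IH3⟩ := ih c b hsort' hmem' hcb hb
    have hchain := fun x => chain_spec n a c (by omega) (by omega) x
    have hword : stairWord a (c :: t) b = chainDesc a c ++ stairWord c t b := rfl
    have happ : ∀ x : Fin n, wperm n (stairWord a (c :: t) b) x
        = wperm n (chainDesc a c) (wperm n (stairWord c t b) x) := by
      intro x
      rw [hword, wperm_append, Equiv.Perm.mul_apply]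
    refine ⟨?_, ?_, ?_⟩
    · intro x hx
      rcases hx with hx | hx
      · -- x = a : fixed by Q, then chain sends a to c
        have hQ : wperm n (stairWord c t b) x = x := IH3 x (Or.inl (by omega))
        rw [happ, hQ, hchain x]
        split_ifs <;> omega
      · simp only [List.mem_cons] at hx
        rcases hx with hx | hx
        · -- x = c : Q sends it up, chain fixes things > c... need value > c
          have hQ : (x : ℕ) < (wperm n (stairWord c t b) x : ℕ) := IH1 x (Or.inl hx)
          rw [happ, hchain]
          split_ifs <;> omega
        · have hQ : (x : ℕ) < (wperm n (stairWord c t b) x : ℕ) :=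
            IH1 x (Or.inr hx)
          have hcx : c < (x : ℕ) := (hmem' _ hx).1
          rw [happ, hchain]
          split_ifs <;> omega
    · intro x h1 h2 hx
      simp only [List.mem_cons] at hx
      push_neg at hx
      rcases Nat.lt_or_ge (x : ℕ) c with hxc | hxc
      · have hQ : wperm n (stairWord c t b) x = x := IH3 x (Or.inl hxc)
        rw [happ, hQ, hchain]
        split_ifs <;> omega
      · have hxc' : c < (x : ℕ) := by
          rcases Nat.eq_or_lt_of_le hxc with h | h
          · exact absurd h.symm hx.1
          · omega
        have hQ : (wperm n (stairWord c t b) x : ℕ) < (x : ℕ) := IH2 x hxc' h2 hx.2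
        rw [happ, hchain]
        split_ifs <;> omega
    · intro x hx
      have hQ : wperm n (stairWord c t b) x = x := by
        apply IH3
        rcases hx with hx | hx
        · exact Or.inl (by omega)
        · exact Or.inr hx
      apply Fin.ext
      rw [happ, hQ, hchain]
      split_ifs <;> omega

lemma fin_lt_aux (n : ℕ) (k : Fin (n - 1)) : (k : ℕ) < n := by
  have := k.isLt; omega

lemma fin_succ_lt_aux (n : ℕ) (k : Fin (n - 1)) : (k : ℕ) + 1 < n := by
  have := k.isLt; omega

lemma pi_braidGen (n : ℕ) (π : BraidGroup n →* Equiv.Perm (Fin n))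
    (hπ : ∀ k : Fin (n - 1), π (PresentedGroup.of k) =
      Equiv.swap (⟨(k : ℕ), fin_lt_aux n k⟩ : Fin n)
        (⟨(k : ℕ) + 1, fin_succ_lt_aux n k⟩ : Fin n)) (i : ℕ) :
    π (braidGen n i) = permOf n i := by
  rw [braidGen, permOf]
  by_cases h : 1 ≤ i ∧ i ≤ n - 1
  · rw [dif_pos h, dif_pos h, hπ]
    congr 1 <;> apply Fin.ext <;> simp <;> omega
  · rw [dif_neg h, dif_neg h, map_one]

lemma pi_wordProd (n : ℕ) (π : BraidGroup n →* Equiv.Perm (Fin n))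
    (hπ : ∀ k : Fin (n - 1), π (PresentedGroup.of k) =
      Equiv.swap (⟨(k : ℕ), fin_lt_aux n k⟩ : Fin n)
        (⟨(k : ℕ) + 1, fin_succ_lt_aux n k⟩ : Fin n)) (l : List ℕ) :
    π (wordProd n l) = wperm n l := by
  rw [wordProd, map_list_prod, List.map_map, wperm]
  congr 1
  apply List.map_congr_left
  intro i _
  exact pi_braidGen n π hπ i

lemma recover (n : ℕ) (hn : 2 ≤ n) (π : BraidGroup n →* Equiv.Perm (Fin n))
    (hπ : ∀ k : Fin (n - 1), π (PresentedGroup.of k) =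
      Equiv.swap (⟨(k : ℕ), fin_lt_aux n k⟩ : Fin n)
        (⟨(k : ℕ) + 1, fin_succ_lt_aux n k⟩ : Fin n))
    (S : Finset ℕ) (hS : S ⊆ Finset.Icc 1 (n - 2)) (j : ℕ)
    (hj1 : 1 ≤ j) (hj2 : j ≤ n - 2) :
    (j ∈ S ↔ j < ((π (normalBraid n S)) ⟨j, by omega⟩ : ℕ)) := by
  rw [normalBraid, pi_wordProd n π hπ, normalWord_eq_stair]
  set l := S.sort (· ≤ ·) with hl
  have hsort : l.Pairwise (· < ·) := (Finset.sortedLT_sort S).pairwise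
  have hmem : ∀ c ∈ l, 0 < c ∧ c < n - 1 := by
    intro c hc
    have := hS (Finset.mem_sort (α := ℕ) (· ≤ ·) |>.mp hc)
    rw [Finset.mem_Icc] at this
    omega
  obtain ⟨P1, P2, P3⟩ := stair_spec n l 0 (n - 1) hsort hmem (by omega) le_rfl
  have key : ∀ x : Fin n, (x : ℕ) = j →
      (j ∈ S ↔ j < (wperm n (stairWord 0 l (n - 1)) x : ℕ)) := by
    intro x hx
    constructor
    · intro hj
      have := P1 x (Or.inr (by rw [hx]; exact (Finset.mem_sort (α := ℕ) (· ≤ ·)).mpr hj))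
      omega
    · intro h
      by_contra hjS
      have hjl : (x : ℕ) ∉ l := by
        rw [hx]; exact fun hc => hjS ((Finset.mem_sort (α := ℕ) (· ≤ ·)).mp hc)
      have := P2 x (by omega) (by omega) hjl
      omega
  exact key ⟨j, by omega⟩ rfl

def braidF (n : ℕ) : Fin (n - 1) → Equiv.Perm (Fin n) := fun k =>
  Equiv.swap (⟨(k : ℕ), fin_lt_aux n k⟩ : Fin n)
    ⟨(k : ℕ) + 1, fin_succ_lt_aux n k⟩

lemma braidF_rels (n : ℕ) : ∀ r ∈ braidRels (n - 1), FreeGroup.lift (braidF n) r = 1 := by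
  intro r hr
  rcases hr with ⟨i, j, hij, rfl⟩ | ⟨i, j, hij, rfl⟩
  · simp only [map_mul, map_inv, FreeGroup.lift_apply_of, braidF]
    have hi := i.isLt
    have hj := j.isLt
    set A : Fin n := ⟨(i : ℕ), by omega⟩
    set B : Fin n := ⟨(i : ℕ) + 1, by omega⟩
    set C : Fin n := ⟨(j : ℕ), by omega⟩
    set D : Fin n := ⟨(j : ℕ) + 1, by omega⟩
    have hdisj : Equiv.Perm.Disjoint (Equiv.swap A B) (Equiv.swap C D) := by
      intro x
      by_cases hx : x = A ∨ x = B
      · right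
        apply Equiv.swap_apply_of_ne_of_ne <;>
          rcases hx with hx | hx <;> subst hx <;>
          simp only [ne_eq, Fin.ext_iff, A, B, C, D] <;> omega
      · left
        push_neg at hx
        exact Equiv.swap_apply_of_ne_of_ne hx.1 hx.2
    have hc := hdisj.commute.eq
    rw [hc]
    group
  · simp only [map_mul, map_inv, mul_inv_rev, FreeGroup.lift_apply_of, braidF, Equiv.swap_inv]
    have hi := i.isLt
    have hj := j.isLt
    set A : Fin n := ⟨(i : ℕ), by omega⟩
    set B : Fin n := ⟨(i : ℕ) + 1, by omega⟩
    set D : Fin n := ⟨(j : ℕ) + 1, by omega⟩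
    have hBC : (⟨(j : ℕ), by omega⟩ : Fin n) = B := by
      apply Fin.ext; simp [B]; omega
    rw [hBC]
    have hDB : D ≠ B := by simp only [ne_eq, Fin.ext_iff, B, D]; omega
    have hDA : D ≠ A := by simp only [ne_eq, Fin.ext_iff, A, D]; omega
    have hAB : A ≠ B := by simp only [ne_eq, Fin.ext_iff, A, B]; omega
    have h1 : Equiv.swap A B * Equiv.swap B D * Equiv.swap A B = Equiv.swap A D := by
      rw [Equiv.swap_comm A B, Equiv.swap_comm B D]
      exact Equiv.swap_mul_swap_mul_swap hDB hDA
    have h2 : Equiv.swap B D * Equiv.swap A B * Equiv.swap B D = Equiv.swap D A :=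
      Equiv.swap_mul_swap_mul_swap hAB (fun h => hDA h.symm)
    have key : (Equiv.swap A B * Equiv.swap B D * Equiv.swap A B) *
        (Equiv.swap B D * Equiv.swap A B * Equiv.swap B D) = 1 := by
      rw [h1, h2, Equiv.swap_comm D A]
      exact Equiv.swap_mul_self A D
    simpa only [mul_assoc] using key

/-- The symmetric-group representation of the braid group. -/
noncomputable def braidPerm (n : ℕ) : BraidGroup n →* Equiv.Perm (Fin n) :=
  PresentedGroup.toGroup (braidF_rels n)

lemma braidPerm_of (n : ℕ) (k : Fin (n - 1)) :
    braidPerm n (PresentedGroup.of k) =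
      Equiv.swap (⟨(k : ℕ), fin_lt_aux n k⟩ : Fin n)
        ⟨(k : ℕ) + 1, fin_succ_lt_aux n k⟩ :=
  PresentedGroup.toGroup.of (braidF_rels n)
/-- For `n ≥ 2`: under any homomorphism `π : B_n → S_n` sending each
generator `σ_{k+1}` to the adjacent transposition `(k+1, k+2)` (0-based: swapping `k` and
`k+1` in `Fin n`), distinct subsets `S ≠ S'` of `{1, …, n-2}` have normal-form braids with
distinct images in `S_n`; in particular the normal-form braids themselves are distinct, the
map `S ↦ normal-form braid of S` is injective, and its image has exactly `2^(n-2)`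
elements. -/
theorem normal_form_braids_distinct (n : ℕ) (hn : 2 ≤ n) :
    (∀ π : BraidGroup n →* Equiv.Perm (Fin n),
      (∀ k : Fin (n - 1), π (PresentedGroup.of k) =
        Equiv.swap (⟨(k : ℕ), by have := k.isLt; omega⟩ : Fin n)
          (⟨(k : ℕ) + 1, by have := k.isLt; omega⟩ : Fin n)) →
      ∀ S S' : Finset ℕ, S ⊆ Finset.Icc 1 (n - 2) → S' ⊆ Finset.Icc 1 (n - 2) → S ≠ S' →
        π (normalBraid n S) ≠ π (normalBraid n S')) ∧
    (∀ S S' : Finset ℕ, S ⊆ Finset.Icc 1 (n - 2) → S' ⊆ Finset.Icc 1 (n - 2) → S ≠ S' →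
      normalBraid n S ≠ normalBraid n S') ∧
    {β : BraidGroup n | ∃ S : Finset ℕ, S ⊆ Finset.Icc 1 (n - 2) ∧ β = normalBraid n S}.ncard
      = 2 ^ (n - 2) := by

  have part1 : ∀ π : BraidGroup n →* Equiv.Perm (Fin n),
      (∀ k : Fin (n - 1), π (PresentedGroup.of k) =
        Equiv.swap (⟨(k : ℕ), by have := k.isLt; omega⟩ : Fin n)
          (⟨(k : ℕ) + 1, by have := k.isLt; omega⟩ : Fin n)) →
      ∀ S S' : Finset ℕ, S ⊆ Finset.Icc 1 (n - 2) → S' ⊆ Finset.Icc 1 (n - 2) → S ≠ S' →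
        π (normalBraid n S) ≠ π (normalBraid n S') := by
    intro π hπ S S' hS hS' hne heq
    apply hne
    apply Finset.ext
    intro j
    by_cases hj : j ∈ Finset.Icc 1 (n - 2)
    · rw [Finset.mem_Icc] at hj
      have h1 := recover n hn π hπ S hS j hj.1 hj.2
      have h2 := recover n hn π hπ S' hS' j hj.1 hj.2
      rw [heq] at h1
      exact h1.trans h2.symm
    · constructor
      · intro h; exact absurd (hS h) hj
      · intro h; exact absurd (hS' h) hj
  have part2 : ∀ S S' : Finset ℕ, S ⊆ Finset.Icc 1 (n - 2) → S' ⊆ Finset.Icc 1 (n - 2) →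
      S ≠ S' → normalBraid n S ≠ normalBraid n S' := by
    intro S S' hS hS' hne h
    exact part1 (braidPerm n) (braidPerm_of n) S S' hS hS' hne (congrArg _ h)
  refine ⟨part1, part2, ?_⟩
  have himg : {β : BraidGroup n | ∃ S : Finset ℕ, S ⊆ Finset.Icc 1 (n - 2) ∧
      β = normalBraid n S} = normalBraid n '' {S : Finset ℕ | S ⊆ Finset.Icc 1 (n - 2)} := by
    ext β
    simp only [Set.mem_setOf_eq, Set.mem_image]
    constructor
    · rintro ⟨S, hS, rfl⟩; exact ⟨S, hS, rfl⟩
    · rintro ⟨S, hS, rfl⟩; exact ⟨S, hS, rfl⟩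
  have hinj : Set.InjOn (normalBraid n) {S : Finset ℕ | S ⊆ Finset.Icc 1 (n - 2)} := by
    intro S hS S' hS' h
    by_contra hne
    exact part2 S S' hS hS' hne h
  rw [himg, Set.ncard_image_of_injOn hinj]
  have hset : {S : Finset ℕ | S ⊆ Finset.Icc 1 (n - 2)}
      = ↑(Finset.Icc 1 (n - 2)).powerset := by
    ext S
    simp only [Set.mem_setOf_eq, Finset.mem_coe, Finset.mem_powerset]
  rw [hset, Set.ncard_coe_finset, Finset.card_powerset, Nat.card_Icc]
  congr 1
end

section
/- Let n ≥ 2, let S be a subset of {1, …, n−2}, and let (i_1, …, i_{n−1}) be the normal-form index sequence of S. For every j with 1 < j < n−1: (a) the index j occurs in the sequence before both j−1 and j+1 if and only if j is the first entry of one of the decreasing chains and that chain has length at least two (equivalently, j ∈ S and j−1 ∉ S); and (b) the index j occurs after both j−1 and j+1 if and only if j is the last entry of a decreasing chain of length at least two (equivalently, j−1 ∈ S and j ∉ S). -/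
lemma chainDesc_length (a b : ℕ) : (chainDesc a b).length = b - a := by
  simp [chainDesc]

lemma mem_chainDesc {a b k : ℕ} : k ∈ chainDesc a b ↔ a < k ∧ k ≤ b := by
  simp only [chainDesc, List.mem_map, List.mem_range]
  constructor
  · rintro ⟨t, ht, rfl⟩; omega
  · intro h; exact ⟨b - k, by omega, by omega⟩

lemma chainDesc_split {a b c : ℕ} (h1 : a ≤ c) (h2 : c ≤ b) :
    chainDesc a b = chainDesc c b ++ chainDesc a c := by
  have : b - a = (b - c) + (c - a) := by omega
  rw [chainDesc, this, List.range_add, List.map_append]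
  congr 1
  rw [List.map_map, chainDesc]
  apply List.map_congr_left
  intro t ht
  simp only [List.mem_range] at ht
  simp only [Function.comp_apply]
  omega

def chains : ℕ → List ℕ → List ℕ
  | _, [] => []
  | a, b :: bs => chainDesc a b ++ chains b bs

lemma mem_chains : ∀ (bs : List ℕ) (a k : ℕ), List.Pairwise (· < ·) (a :: bs) →
    (k ∈ chains a bs ↔ a < k ∧ ∃ b ∈ bs, k ≤ b)
  | [], a, k, _ => by simp [chains]
  | b :: bs, a, k, hp => by
    obtain ⟨ha, hp'⟩ := List.pairwise_cons.1 hp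
    have hab : a < b := ha _ (by simp)
    have hbs : ∀ c ∈ bs, b < c := fun c hc => (List.pairwise_cons.1 hp').1 c hc
    rw [chains, List.mem_append, mem_chainDesc, mem_chains bs b k hp']
    constructor
    · rintro (⟨h1, h2⟩ | ⟨h1, c, hc, h2⟩)
      · exact ⟨h1, b, by simp, h2⟩
      · exact ⟨by omega, c, by simp [hc], h2⟩
    · rintro ⟨h1, c, hc, h2⟩
      rcases List.mem_cons.1 hc with rfl | hc
      · exact Or.inl ⟨h1, h2⟩
      · by_cases hkb : k ≤ b
        · exact Or.inl ⟨h1, hkb⟩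
        · exact Or.inr ⟨by omega, c, hc, h2⟩

lemma indexOf_chainDesc_lt {a b k : ℕ} (ha : a < k) (hb : k + 1 ≤ b) :
    (chainDesc a b).idxOf (k + 1) < (chainDesc a b).idxOf k := by
  rw [chainDesc_split (c := k) (by omega) (by omega)]
  rw [List.idxOf_append_of_mem (mem_chainDesc.2 ⟨by omega, hb⟩),
    List.idxOf_append_of_notMem (by rw [mem_chainDesc]; omega)]
  have h1 : (chainDesc k b).idxOf (k + 1) < (chainDesc k b).length :=
    List.idxOf_lt_length_iff.2 (mem_chainDesc.2 ⟨by omega, hb⟩)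
  rw [chainDesc_length] at h1
  rw [chainDesc_length]
  omega

lemma indexOf_chains : ∀ (bs : List ℕ) (a k : ℕ), List.Pairwise (· < ·) (a :: bs) →
    a < k → (∃ b ∈ bs, k + 1 ≤ b) →
    ((chains a bs).idxOf k < (chains a bs).idxOf (k + 1) ↔ k ∈ bs)
  | [], a, k, _, _, h => by simp at h
  | b :: bs, a, k, hp, hak, ⟨c, hc, hkc⟩ => by
    obtain ⟨ha, hp'⟩ := List.pairwise_cons.1 hp
    have hab : a < b := ha _ (by simp)
    have hbs : ∀ c ∈ bs, b < c := fun c hc => (List.pairwise_cons.1 hp').1 c hc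
    rcases lt_trichotomy k b with hkb | rfl | hkb
    · have hk : k ∈ chainDesc a b := mem_chainDesc.2 ⟨hak, by omega⟩
      have hk1 : k + 1 ∈ chainDesc a b := mem_chainDesc.2 ⟨by omega, by omega⟩
      rw [chains, List.idxOf_append_of_mem hk, List.idxOf_append_of_mem hk1]
      have := indexOf_chainDesc_lt hak (by omega : k + 1 ≤ b)
      constructor
      · omega
      · intro hmem
        rcases List.mem_cons.1 hmem with rfl | hmem
        · omega
        · exact absurd (hbs _ hmem) (by omega)
    · have hk : k ∈ chainDesc a k := mem_chainDesc.2 ⟨hak, le_refl _⟩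
      rw [chains, List.idxOf_append_of_mem hk,
        List.idxOf_append_of_notMem (by rw [mem_chainDesc]; omega)]
      have h1 : (chainDesc a k).idxOf k < (chainDesc a k).length :=
        List.idxOf_lt_length_iff.2 hk
      simp only [List.mem_cons, true_or, iff_true]
      omega
    · have hcbs : c ∈ bs := by
        rcases List.mem_cons.1 hc with rfl | h
        · omega
        · exact h
      rw [chains, List.idxOf_append_of_notMem (by rw [mem_chainDesc]; omega),
        List.idxOf_append_of_notMem (by rw [mem_chainDesc]; omega)]
      rw [Nat.add_lt_add_iff_left,
        indexOf_chains bs b k hp' hkb ⟨c, hcbs, hkc⟩]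
      simp only [List.mem_cons]
      constructor
      · exact Or.inr
      · rintro (rfl | h)
        · omega
        · exact h

lemma flatten_zip_eq_chains : ∀ (l : List ℕ) (a : ℕ),
    (((a :: l).zip l).map (fun p => chainDesc p.1 p.2)).flatten = chains a l
  | [], a => by simp [chains]
  | b :: bs, a => by
    simp only [List.zip_cons_cons, List.map_cons, List.flatten_cons, chains]
    rw [flatten_zip_eq_chains bs b]

lemma normalWord_eq_chains (n : ℕ) (S : Finset ℕ) :
    normalWord n S = chains 0 (S.sort (· ≤ ·) ++ [n - 1]) := by
  rw [normalWord]
  have h : ((0 :: S.sort (· ≤ ·)) ++ [n - 1]) = 0 :: (S.sort (· ≤ ·) ++ [n - 1]) := by simp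
  rw [h]
  have h2 : (0 :: (S.sort (· ≤ ·) ++ [n - 1])).tail = S.sort (· ≤ ·) ++ [n - 1] := rfl
  rw [h2, flatten_zip_eq_chains]

/-- Let `n ≥ 2`, `S ⊆ {1, …, n-2}`, and let `(i_1, …, i_{n-1})` be the
normal-form index sequence of `S`. For `1 < j < n - 1`:
(a) `j` occurs before both `j - 1` and `j + 1` iff `j` is the first entry of a decreasing
chain of length at least two, i.e. iff `j ∈ S` and `j - 1 ∉ S`; and
(b) `j` occurs after both `j - 1` and `j + 1` iff `j` is the last entry of a decreasing
chain of length at least two, i.e. iff `j - 1 ∈ S` and `j ∉ S`. -/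
theorem normal_word_first_last_of_chain (n : ℕ) (hn : 2 ≤ n) (S : Finset ℕ)
    (hS : S ⊆ Finset.Icc 1 (n - 2)) (j : ℕ) (h1 : 1 < j) (h2 : j < n - 1) :
    (((normalWord n S).idxOf j < (normalWord n S).idxOf (j - 1) ∧
        (normalWord n S).idxOf j < (normalWord n S).idxOf (j + 1)) ↔
      (j ∈ S ∧ j - 1 ∉ S)) ∧
    (((normalWord n S).idxOf (j - 1) < (normalWord n S).idxOf j ∧
        (normalWord n S).idxOf (j + 1) < (normalWord n S).idxOf j) ↔
      (j - 1 ∈ S ∧ j ∉ S)) := by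
  set L : List ℕ := S.sort (· ≤ ·) ++ [n - 1] with hL
  have hSmem : ∀ x ∈ S, 1 ≤ x ∧ x ≤ n - 2 := by
    intro x hx
    have := hS hx
    rw [Finset.mem_Icc] at this
    exact this
  have hpair : List.Pairwise (· < ·) (0 :: L) := by
    rw [List.pairwise_cons]
    constructor
    · intro x hx
      rw [hL, List.mem_append, List.mem_singleton] at hx
      rcases hx with hx | rfl
      · have := hSmem x (Finset.mem_sort (α := ℕ) (· ≤ ·) |>.1 hx)
        omega
      · omega
    · rw [hL, List.pairwise_append]
      refine ⟨S.sortedLT_sort.pairwise, by simp, ?_⟩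
      intro x hx y hy
      rw [List.mem_singleton] at hy
      subst hy
      have := hSmem x (Finset.mem_sort (α := ℕ) (· ≤ ·) |>.1 hx)
      omega
  have hmemL : ∀ k, k ∈ L ↔ k ∈ S ∨ k = n - 1 := by
    intro k
    rw [hL, List.mem_append, List.mem_singleton, Finset.mem_sort]
  have hword := normalWord_eq_chains n S
  rw [← hL] at hword
  -- key fact
  have key : ∀ k, 1 ≤ k → k ≤ n - 2 →
      ((normalWord n S).idxOf k < (normalWord n S).idxOf (k + 1) ↔ k ∈ S) := by
    intro k hk1 hk2
    rw [hword, indexOf_chains L 0 k hpair (by omega)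
      ⟨n - 1, (hmemL (n - 1)).2 (Or.inr rfl), by omega⟩, hmemL]
    constructor
    · rintro (h | rfl)
      · exact h
      · omega
    · exact Or.inl
  have A := key (j - 1) (by omega) (by omega)
  rw [Nat.sub_add_cancel (by omega)] at A
  have B := key j (by omega) (by omega)
  -- membership in the word
  have hmemW : ∀ k, 1 ≤ k → k ≤ n - 1 → k ∈ normalWord n S := by
    intro k hk1 hk2
    rw [hword, mem_chains L 0 k hpair]
    exact ⟨by omega, n - 1, (hmemL (n - 1)).2 (Or.inr rfl), hk2⟩
  have ne1 : (normalWord n S).idxOf j ≠ (normalWord n S).idxOf (j - 1) := by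
    intro h
    have := (List.idxOf_inj (hmemW j (by omega) (by omega))).1 h
    omega
  have ne2 : (normalWord n S).idxOf j ≠ (normalWord n S).idxOf (j + 1) := by
    intro h
    have := (List.idxOf_inj (hmemW j (by omega) (by omega))).1 h
    omega
  by_cases hP : j - 1 ∈ S <;> by_cases hQ : j ∈ S <;>
    simp only [hP, hQ, iff_true, iff_false, not_true_eq_false, not_false_eq_true,
      and_true, and_false, true_and, false_and] at A B ⊢ <;>
    constructor <;> omega
end

section
/- Let p, q, r be positive integers with gcd(p,q) < r ≤ p + q. Then there exist positive integers n and m with n < r, m < r, and n + m ≥ r, such that the pair (n, m) is reachable from (p, q) by finitely many Euclidean subtraction steps, where a single step replaces a pair (a, b) with a > b by (a − b, b), or a pair (a, b) with b > a by (a, b − a). In particular, gcd(n, m) = gcd(p, q). -/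
/-- A single Euclidean subtraction step on a pair of positive integers:
`(a, b) → (a - b, b)` if `a > b`, and `(a, b) → (a, b - a)` if `b > a`. -/
def EuclidStep (p q : ℕ × ℕ) : Prop :=
  (p.2 < p.1 ∧ q = (p.1 - p.2, p.2)) ∨ (p.1 < p.2 ∧ q = (p.1, p.2 - p.1))

lemma euclid_aux : ∀ s p q r : ℕ, p + q ≤ s → 0 < p → 0 < q → 0 < r →
    Nat.gcd p q < r → r ≤ p + q →
    ∃ n m : ℕ, 0 < n ∧ 0 < m ∧ n < r ∧ m < r ∧ r ≤ n + m ∧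
      Relation.ReflTransGen EuclidStep (p, q) (n, m) ∧
      Nat.gcd n m = Nat.gcd p q := by
  intro s
  induction s with
  | zero => intro p q r hs hp hq _ _ _; omega
  | succ s ih =>
    intro p q r hs hp hq hr hgcd hsum
    by_cases hpr : p < r
    · by_cases hqr : q < r
      · exact ⟨p, q, hp, hq, hpr, hqr, hsum, Relation.ReflTransGen.refl, rfl⟩
      ·
        have hne : p ≠ q := by
          rintro rfl
          simp [Nat.gcd_self] at hgcd
          omega
        have hlt : p < q := by omega
        have step : EuclidStep (p, q) (p, q - p) := Or.inr ⟨hlt, rfl⟩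
        have hq' : 0 < q - p := by omega
        have hg : Nat.gcd p (q - p) = Nat.gcd p q := by
          rw [Nat.gcd_comm p (q-p), Nat.gcd_sub_self_left (le_of_lt hlt), Nat.gcd_comm]
        obtain ⟨n, m, h1, h2, h3, h4, h5, h6, h7⟩ :=
          ih p (q - p) r (by omega) hp hq' hr (by omega) (by omega)
        exact ⟨n, m, h1, h2, h3, h4, h5, Relation.ReflTransGen.head step h6, by rw [h7, hg]⟩
    · have hne : p ≠ q := by
        rintro rfl
        simp [Nat.gcd_self] at hgcd
        omega
      by_cases hlt : q < p
      · have step : EuclidStep (p, q) (p - q, q) := Or.inl ⟨hlt, rfl⟩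
        have hg : Nat.gcd (p - q) q = Nat.gcd p q := by
          rw [Nat.gcd_sub_self_left (le_of_lt hlt)]
        obtain ⟨n, m, h1, h2, h3, h4, h5, h6, h7⟩ :=
          ih (p - q) q r (by omega) (by omega) hq hr (by omega) (by omega)
        exact ⟨n, m, h1, h2, h3, h4, h5, Relation.ReflTransGen.head step h6, by rw [h7, hg]⟩
      · have hlt' : p < q := by omega
        have step : EuclidStep (p, q) (p, q - p) := Or.inr ⟨hlt', rfl⟩
        have hg : Nat.gcd p (q - p) = Nat.gcd p q := by
          rw [Nat.gcd_comm p (q-p), Nat.gcd_sub_self_left (le_of_lt hlt'), Nat.gcd_comm]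
        obtain ⟨n, m, h1, h2, h3, h4, h5, h6, h7⟩ :=
          ih p (q - p) r (by omega) hp (by omega) hr (by omega) (by omega)
        exact ⟨n, m, h1, h2, h3, h4, h5, Relation.ReflTransGen.head step h6, by rw [h7, hg]⟩

/-- Let `p, q, r` be positive integers with `gcd(p,q) < r ≤ p + q`.
Then there exist positive integers `n, m` with `n < r`, `m < r`, `n + m ≥ r`, such that
`(n, m)` is reachable from `(p, q)` by finitely many Euclidean subtraction steps.
In particular, `gcd(n, m) = gcd(p, q)`. -/
theorem euclid_reduction_exists (p q r : ℕ) (hp : 0 < p) (hq : 0 < q) (hr : 0 < r)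
    (hgcd : Nat.gcd p q < r) (hsum : r ≤ p + q) :
    ∃ n m : ℕ, 0 < n ∧ 0 < m ∧ n < r ∧ m < r ∧ r ≤ n + m ∧
      Relation.ReflTransGen EuclidStep (p, q) (n, m) ∧
      Nat.gcd n m = Nat.gcd p q := by
  exact euclid_aux (p + q) p q r le_rfl hp hq hr hgcd hsum
end
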